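/- arXiv:1401.7428 — 7 statements merged into one kernel-verified Lean document; each statement's English description precedes it below -/
import Mathlib

section
/- Let X be a real Banach space, let A : X ⇉ X* be ultramaximally monotone, and let (x, x*) ∈ X × X*. Then there exists (a, a*) ∈ gra A such that ‖x* − a*‖ = ‖x − a‖ and ‖x − a‖² + ‖x* − a*‖² + 2⟨x − a, x* − a*⟩ = 0. -/
open Pointwise Set NormedSpace

variable {X : Type*} [NormedAddCommGroup X] [NormedSpace ℝ X]

/-- A set-valued operator `A : X ⇉ X*`, identified with its graph, is monotone. -/
def IsMonotoneOp (A : Set (X × StrongDual ℝ X)) : Prop :=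
  ∀ p ∈ A, ∀ q ∈ A, 0 ≤ (p.2 - q.2) (p.1 - q.1)

/-- `A` is maximally monotone: monotone and every monotonically related pair belongs to it. -/
def IsMaxMonotone (A : Set (X × StrongDual ℝ X)) : Prop :=
  IsMonotoneOp A ∧
    ∀ (x : X) (xs : StrongDual ℝ X), (∀ p ∈ A, 0 ≤ (xs - p.2) (x - p.1)) → (x, xs) ∈ A

/-- `A` is ultramaximally monotone: monotone, and maximally monotone with respect to
`X** × X*`. -/
def IsUltraMaxMonotone (A : Set (X × StrongDual ℝ X)) : Prop :=
  IsMonotoneOp A ∧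
    ∀ (xss : StrongDual ℝ (StrongDual ℝ X)) (xs : StrongDual ℝ X),
      (∀ p ∈ A, 0 ≤ (xss - inclusionInDoubleDual ℝ X p.1) (xs - p.2)) →
      ∃ x : X, xss = inclusionInDoubleDual ℝ X x ∧ (x, xs) ∈ A

/-- `A` is maximally monotone of type (NI): for every `(x**, x*)`,
`inf_{(a,a*) ∈ gra A} ⟨x* − a*, x** − â⟩ ≤ 0`. -/
def IsTypeNI (A : Set (X × StrongDual ℝ X)) : Prop :=
  IsMaxMonotone A ∧
    ∀ (xss : StrongDual ℝ (StrongDual ℝ X)) (xs : StrongDual ℝ X) (ε : ℝ), 0 < ε →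
      ∃ p ∈ A, (xss - inclusionInDoubleDual ℝ X p.1) (xs - p.2) < ε

def domOp (A : Set (X × StrongDual ℝ X)) : Set X := {x | ∃ xs, (x, xs) ∈ A}

def ranOp (A : Set (X × StrongDual ℝ X)) : Set (StrongDual ℝ X) := {xs | ∃ x, (x, xs) ∈ A}

/-- The sum `A + B`: `gra (A+B) = {(x, a* + b*) : (x,a*) ∈ gra A, (x,b*) ∈ gra B}`. -/
def sumOp (A B : Set (X × StrongDual ℝ X)) : Set (X × StrongDual ℝ X) :=
  {p | ∃ as bs, (p.1, as) ∈ A ∧ (p.1, bs) ∈ B ∧ p.2 = as + bs}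

/-- The Fitzpatrick function `F_A(x, x*) = sup_{(a,a*) ∈ gra A} (⟨x,a*⟩ + ⟨a,x*⟩ − ⟨a,a*⟩)`. -/
noncomputable def fitz (A : Set (X × StrongDual ℝ X)) : X × StrongDual ℝ X → EReal :=
  fun q => ⨆ p : A, ((p.1.2 q.1 + q.2 p.1.1 - p.1.2 p.1.1 : ℝ) : EReal)

/-- The extended Fitzpatrick function
`Φ_A(x**, x*) = sup_{(a,a*) ∈ gra A} (⟨a*,x**⟩ + ⟨a,x*⟩ − ⟨a,a*⟩)` on `X** × X*`. -/
noncomputable def phiFitz (A : Set (X × StrongDual ℝ X)) : StrongDual ℝ (StrongDual ℝ X) × StrongDual ℝ X → EReal :=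
  fun q => ⨆ p : A, ((q.1 p.1.2 + q.2 p.1.1 - p.1.2 p.1.1 : ℝ) : EReal)

/-- The Fenchel conjugate of the Fitzpatrick function,
`F_A*(x*, x**) = sup_{(y,y*)} (⟨y,x*⟩ + ⟨y*,x**⟩ − F_A(y,y*))`. -/
noncomputable def fitzConj (A : Set (X × StrongDual ℝ X)) :
    StrongDual ℝ X × StrongDual ℝ (StrongDual ℝ X) → EReal :=
  fun r => ⨆ q : X × StrongDual ℝ X, (((r.1 q.1 + r.2 q.2 : ℝ) : EReal) - fitz A q)


/-- `A` is maximally monotone of type (FPV). -/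
def IsFPV (A : Set (X × StrongDual ℝ X)) : Prop :=
  IsMaxMonotone A ∧
    ∀ U : Set X, IsOpen U → Convex ℝ U → (U ∩ domOp A).Nonempty →
      ∀ x ∈ U, ∀ xs : StrongDual ℝ X,
        (∀ p ∈ A, p.1 ∈ U → 0 ≤ (xs - p.2) (x - p.1)) → (x, xs) ∈ A

/-- `A` is rectangular: `dom A × ran A ⊆ dom F_A`. -/
def IsRectangular (A : Set (X × StrongDual ℝ X)) : Prop :=
  (domOp A) ×ˢ (ranOp A) ⊆ {q : X × StrongDual ℝ X | fitz A q < ⊤}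

/-- The graph of the duality map `J x = {x* : ⟨x,x*⟩ = ‖x‖² and ‖x*‖ = ‖x‖}`. -/
def dualityMapGraph : Set (X × StrongDual ℝ X) :=
  {p | p.2 p.1 = ‖p.1‖ ^ 2 ∧ ‖p.2‖ = ‖p.1‖}

/-- The partial inf-convolution `(F₁ □₂ F₂)(x, x*) = inf_{v*} (F₁(x, x* − v*) + F₂(x, v*))`. -/
noncomputable def infConv2 (F1 F2 : X × StrongDual ℝ X → EReal) : X × StrongDual ℝ X → EReal :=
  fun q => ⨅ v : StrongDual ℝ X, (F1 (q.1, q.2 - v) + F2 (q.1, v))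


lemma convex_combo_lemma (a a' c c' t t' s1 s2 s1' s2' m1 m2 : ℝ)
    (ha : 0 ≤ a) (ha' : 0 ≤ a') (haa : a + a' = 1)
    (hn1 : m1 ≤ a * s1 + a' * s1') (hn2 : m2 ≤ a * s2 + a' * s2')
    (hs1n : 0 ≤ s1) (hs2n : 0 ≤ s2) (hs1n' : 0 ≤ s1') (hs2n' : 0 ≤ s2')
    (hm1n : 0 ≤ m1) (hm2n : 0 ≤ m2)
    (hlt : c + (s1 ^ 2 / 2 + s2 ^ 2 / 2) < t) (hlt' : c' + (s1' ^ 2 / 2 + s2' ^ 2 / 2) < t') :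
    a * c + a' * c' + (m1 ^ 2 / 2 + m2 ^ 2 / 2) < a * t + a' * t' := by
  have hsq1 : m1 ^ 2 ≤ a * s1 ^ 2 + a' * s1' ^ 2 := by
    nlinarith [mul_nonneg ha ha', sq_nonneg (s1 - s1')]
  have hsq2 : m2 ^ 2 ≤ a * s2 ^ 2 + a' * s2' ^ 2 := by
    nlinarith [mul_nonneg ha ha', sq_nonneg (s2 - s2')]
  have key : a * (c + (s1 ^ 2 / 2 + s2 ^ 2 / 2)) + a' * (c' + (s1' ^ 2 / 2 + s2' ^ 2 / 2))
      < a * t + a' * t' := by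
    rcases eq_or_lt_of_le ha with h | h
    · have ha'1 : a' = 1 := by linarith
      rw [← h, ha'1]
      simpa using hlt'
    · have hmul := mul_lt_mul_of_pos_left hlt h
      have hmul' := mul_le_mul_of_nonneg_left hlt'.le ha'
      nlinarith [hmul, hmul']
  nlinarith [key, hsq1, hsq2]



/-- If `f v - ‖v‖²/2 ≤ D` for all `v`, then `‖f‖²/2 ≤ D`. -/
lemma aux_sq_norm {E : Type*} [NormedAddCommGroup E] [NormedSpace ℝ E]
    (f : E →L[ℝ] ℝ) (D : ℝ) (h : ∀ v : E, f v - ‖v‖ ^ 2 / 2 ≤ D) : ‖f‖ ^ 2 / 2 ≤ D := by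
  have hD : 0 ≤ D := by have := h 0; simpa using this
  by_contra hc
  push_neg at hc
  have hfpos : 0 < ‖f‖ := by nlinarith [norm_nonneg f]
  have h2D : (0:ℝ) ≤ 2 * D := by linarith
  have hslt : Real.sqrt (2 * D) < ‖f‖ := by
    nlinarith [Real.sq_sqrt h2D, Real.sqrt_nonneg (2 * D)]
  set c : ℝ := (Real.sqrt (2 * D) + ‖f‖) / 2 with hcdef
  have hs0 : 0 ≤ Real.sqrt (2 * D) := Real.sqrt_nonneg _
  have hcpos : 0 ≤ c := by positivity
  have hclt : c < ‖f‖ := by rw [hcdef]; linarith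
  have hc2 : 2 * D < c ^ 2 := by
    have h1 : Real.sqrt (2 * D) < c := by rw [hcdef]; linarith
    nlinarith [Real.sq_sqrt h2D]
  obtain ⟨v, hv1, hv2⟩ := f.exists_lt_apply_of_lt_opNorm hclt
  have hv2' : c < |f v| := by simpa [Real.norm_eq_abs] using hv2
  set u : E := if 0 ≤ f v then c • v else -(c • v) with hu
  have hfu : f u = c * |f v| := by
    rw [hu]; split_ifs with h0
    · rw [map_smul, smul_eq_mul, abs_of_nonneg h0]
    · rw [map_neg, map_smul, smul_eq_mul]
      push_neg at h0
      rw [abs_of_neg h0]; ring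
  have hnu : ‖u‖ ≤ c := by
    have : ‖c • v‖ ≤ c := by
      rw [norm_smul, Real.norm_eq_abs, abs_of_nonneg hcpos]
      nlinarith [norm_nonneg v]
    rw [hu]; split_ifs
    · exact this
    · rw [norm_neg]; exact this
  have h1 : c * c ≤ f u := by rw [hfu]; nlinarith
  have := h u
  nlinarith [norm_nonneg u, sq_nonneg ‖u‖]

lemma bound_lemma (N1 N2 C0 : ℝ) (h1 : N1 ^ 2 / 2 ≤ C0 * (1 + N1 + N2))
    (h2 : N2 ^ 2 / 2 ≤ C0 * (1 + N1 + N2)) (hN1 : 0 ≤ N1) (hN2 : 0 ≤ N2) (hC : 1 ≤ C0) :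
    N1 ≤ 16 * C0 + 1 ∧ N2 ≤ 16 * C0 + 1 := by
  have hM : N1 + N2 ≤ 16 * C0 + 1 := by
    by_contra h
    push_neg at h
    have hMpos : (0 : ℝ) < N1 + N2 := by linarith
    nlinarith [sq_nonneg (N1 - N2), mul_lt_mul_of_pos_right h hMpos,
      mul_le_mul_of_nonneg_right hC (le_of_lt hMpos)]
  constructor <;> linarith

lemma cluster_le {P : Type*} [TopologicalSpace P] (s : ℕ → P) (L : P)
    (hcl : ClusterPt L (Filter.map s Filter.atTop)) (g : P → ℝ) (hgc : Continuous g) (c : ℝ)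
    (hs : ∀ n : ℕ, g (s n) ≤ c + 1 / ((n : ℝ) + 1)) : g L ≤ c := by
  have hδ : ∀ δ : ℝ, 0 < δ → g L ≤ c + δ := by
    intro δ hδ
    obtain ⟨N, hN⟩ := exists_nat_one_div_lt hδ
    have htail : ∀ n ≥ N, s n ∈ {p | g p ≤ c + δ} := by
      intro n hn
      have h1 : (1 : ℝ) / ((n : ℝ) + 1) ≤ 1 / ((N : ℝ) + 1) := by
        apply one_div_le_one_div_of_le (by positivity)
        have : (N : ℝ) ≤ (n : ℝ) := by exact_mod_cast hn
        linarith
      have h2 := hs n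
      simp only [Set.mem_setOf_eq]
      linarith [hN]
    have hle : Filter.map s Filter.atTop ≤ Filter.principal (s '' Set.Ici N) := by
      rw [Filter.le_principal_iff]
      exact Filter.image_mem_map (Filter.Ici_mem_atTop N)
    have hcl2 : ClusterPt L (Filter.principal (s '' Set.Ici N)) := hcl.mono hle
    have hLmem : L ∈ closure (s '' Set.Ici N) := mem_closure_iff_clusterPt.mpr hcl2
    have hsub : closure (s '' Set.Ici N) ⊆ {p | g p ≤ c + δ} := by
      apply closure_minimal
      · rintro p ⟨n, hn, rfl⟩
        exact htail n hn
      · exact isClosed_Iic.preimage hgc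
    exact hsub hLmem
  by_contra h
  push_neg at h
  have := hδ ((g L - c) / 2) (by linarith)
  linarith

set_option maxHeartbeats 1000000 in
theorem stmt11 [CompleteSpace X] (A : Set (X × StrongDual ℝ X)) (hA : IsUltraMaxMonotone A)
    (x : X) (xs : StrongDual ℝ X) :
    ∃ p ∈ A, ‖xs - p.2‖ = ‖x - p.1‖ ∧
      ‖x - p.1‖ ^ 2 + ‖xs - p.2‖ ^ 2 + 2 * (xs - p.2) (x - p.1) = 0 := by
  classical
  obtain ⟨hmono, hult⟩ := hA
  have hne : A.Nonempty := by
    by_contra h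
    rw [Set.not_nonempty_iff_eq_empty] at h
    obtain ⟨x₀, -, hx₀⟩ := hult 0 0 (by intro p hp; rw [h] at hp; exact absurd hp (Set.notMem_empty p))
    rw [h] at hx₀
    exact absurd hx₀ (Set.notMem_empty _)
  obtain ⟨p₀, hp₀⟩ := hne
  set ι : X →L[ℝ] StrongDual ℝ (StrongDual ℝ X) := inclusionInDoubleDual ℝ X with hιdef
  set B : Set (X × StrongDual ℝ X) := {q | (q.1 + x, q.2 + xs) ∈ A} with hBdef
  have hq₀ : ((p₀.1 - x, p₀.2 - xs) : X × StrongDual ℝ X) ∈ B := by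
    simp only [hBdef, Set.mem_setOf_eq, sub_add_cancel]
    exact hp₀
  set b : X := p₀.1 - x with hbdef
  set bs : StrongDual ℝ X := p₀.2 - xs with hbsdef
  clear_value b bs
  clear hbdef hbsdef hp₀
  have hBmono : ∀ q ∈ B, ∀ q' ∈ B, 0 ≤ (q.2 - q'.2) (q.1 - q'.1) := by
    intro q hq q' hq'
    have h := hmono _ hq _ hq'
    simpa using h
  have hBU : ∀ (F : StrongDual ℝ (StrongDual ℝ X)) (f : StrongDual ℝ X),
      (∀ q ∈ B, 0 ≤ (F - ι q.1) (f - q.2)) → ∃ a : X, F = ι a ∧ (a, f) ∈ B := by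
    intro F f hrel
    have hpre : ∀ p ∈ A, 0 ≤ (F + ι x - ι p.1) (f + xs - p.2) := by
      intro p hp
      have hpB : ((p.1 - x, p.2 - xs) : X × StrongDual ℝ X) ∈ B := by
        simp only [hBdef, Set.mem_setOf_eq, sub_add_cancel]
        exact hp
      have h := hrel _ hpB
      have e1 : F + ι x - ι p.1 = F - ι (p.1 - x) := by
        rw [map_sub]; abel
      have e2 : f + xs - p.2 = f - (p.2 - xs) := by abel
      rw [e1, e2]
      exact h
    obtain ⟨a, ha, hmem⟩ := hult (F + ι x) (f + xs) hpre
    refine ⟨a - x, ?_, ?_⟩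
    · rw [map_sub]
      rw [show (inclusionInDoubleDual ℝ X) a = F + ι x from ha.symm]
      abel
    · show (a - x + x, f + xs) ∈ A
      rw [sub_add_cancel]
      exact hmem
  -- Step 1 : "primal value nonnegative"
  have step1 : ∀ (z : X × StrongDual ℝ X) (s : ℝ),
      (∀ q ∈ B, z.2 q.1 + q.2 z.1 - q.2 q.1 ≤ s) →
      0 ≤ s + (‖z.1‖ ^ 2 / 2 + ‖z.2‖ ^ 2 / 2) := by
    rintro ⟨z1, z2⟩ s hzs
    by_contra hneg
    push_neg at hneg
    have hcs : |z2 z1| ≤ ‖z2‖ * ‖z1‖ := by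
      simpa [Real.norm_eq_abs] using z2.le_opNorm z1
    have hpj : -(‖z1‖ ^ 2 / 2 + ‖z2‖ ^ 2 / 2) ≤ z2 z1 := by
      nlinarith [abs_le.mp hcs, sq_nonneg (‖z1‖ - ‖z2‖)]
    have hpre : ∀ q ∈ B, 0 ≤ ((ι z1 : StrongDual ℝ (StrongDual ℝ X)) - ι q.1) (z2 - q.2) := by
      intro q hq
      have hq' := hzs q hq
      have expand : ((ι z1 : StrongDual ℝ (StrongDual ℝ X)) - ι q.1) (z2 - q.2)
          = z2 z1 - (z2 q.1 + q.2 z1 - q.2 q.1) := by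
        simp [hιdef, ContinuousLinearMap.sub_apply, NormedSpace.dual_def, map_sub]
        ring
      rw [expand]
      linarith
    obtain ⟨a, ha, hmem⟩ := hBU (ι z1) z2 hpre
    have haz : a = z1 := by
      apply ((NormedSpace.eq_iff_forall_dual_eq ℝ).mpr)
      intro g
      have := congrArg (fun T : StrongDual ℝ (StrongDual ℝ X) => T g) ha
      simpa [hιdef, NormedSpace.dual_def] using this.symm
    rw [haz] at hmem
    have h := hzs (z1, z2) hmem
    simp only at h
    linarith [hpj]
  -- Step 2 : approximate dual solutions via Hahn-Banach separation
  have step2 : ∀ ε : ℝ, 0 < ε → ∃ (g1 : StrongDual ℝ X) (g2 : StrongDual ℝ (StrongDual ℝ X)),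
      ∀ q ∈ B, ∀ (v : X) (w : StrongDual ℝ X),
        g1 q.1 + g2 q.2 + g1 v + g2 w - q.2 q.1 - ‖v‖ ^ 2 / 2 - ‖w‖ ^ 2 / 2 ≤ ε := by
    intro ε hε
    set C : Set ((X × StrongDual ℝ X) × ℝ) :=
      {ut | ∃ z : X × StrongDual ℝ X, ∃ c : ℝ,
        (∀ q ∈ B, z.2 q.1 + q.2 z.1 - q.2 q.1 ≤ c) ∧
        c + (‖z.1 + ut.1.1‖ ^ 2 / 2 + ‖z.2 + ut.1.2‖ ^ 2 / 2) < ut.2} with hCdef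
    have hopen : IsOpen C := by
      rw [isOpen_iff_mem_nhds]
      rintro ⟨u, t⟩ ⟨z, c, hzc, hlt⟩
      have hcont : Continuous fun ut : (X × StrongDual ℝ X) × ℝ =>
          ut.2 - (c + (‖z.1 + ut.1.1‖ ^ 2 / 2 + ‖z.2 + ut.1.2‖ ^ 2 / 2)) := by
        have c1 : Continuous fun ut : (X × StrongDual ℝ X) × ℝ => z.1 + ut.1.1 :=
          continuous_const.add (continuous_fst.comp continuous_fst)
        have c2 : Continuous fun ut : (X × StrongDual ℝ X) × ℝ => z.2 + ut.1.2 :=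
          continuous_const.add (continuous_snd.comp continuous_fst)
        exact continuous_snd.sub
          (continuous_const.add (((c1.norm.pow 2).div_const 2).add
            ((c2.norm.pow 2).div_const 2)))
      have hSopen : IsOpen {ut : (X × StrongDual ℝ X) × ℝ |
          0 < ut.2 - (c + (‖z.1 + ut.1.1‖ ^ 2 / 2 + ‖z.2 + ut.1.2‖ ^ 2 / 2))} :=
        isOpen_lt continuous_const hcont
      refine Filter.mem_of_superset (hSopen.mem_nhds ?_) ?_
      · simp only [Set.mem_setOf_eq]
        linarith
      · rintro ⟨u', t'⟩ hut'
        simp only [Set.mem_setOf_eq] at hut'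
        exact ⟨z, c, hzc, by linarith⟩
    have hconv : Convex ℝ C := by
      rintro ⟨u, t⟩ ⟨z, c, hzc, hlt⟩ ⟨u', t'⟩ ⟨z', c', hzc', hlt'⟩ a a' ha ha' haa
      refine ⟨a • z + a' • z', a * c + a' * c', ?_, ?_⟩
      · intro q hq
        have h1 := hzc q hq
        have h2 := hzc' q hq
        have hmul1 := mul_le_mul_of_nonneg_left h1 ha
        have hmul2 := mul_le_mul_of_nonneg_left h2 ha'
        have habπ : a * (q.2 q.1) + a' * (q.2 q.1) = q.2 q.1 := by
          rw [← add_mul, haa, one_mul]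
        simp only [Prod.fst_add, Prod.snd_add, Prod.smul_fst, Prod.smul_snd, map_add, map_smul,
          ContinuousLinearMap.add_apply, ContinuousLinearMap.coe_smul', Pi.smul_apply,
          smul_eq_mul]
        nlinarith [hmul1, hmul2]
      · -- second condition
        have e1 : (a • z + a' • z').1 + (a • (u, t) + a' • (u', t')).1.1
            = a • (z.1 + u.1) + a' • (z'.1 + u'.1) := by
          simp only [Prod.fst_add, Prod.smul_fst, smul_add]
          abel
        have e2 : (a • z + a' • z').2 + (a • (u, t) + a' • (u', t')).1.2
            = a • (z.2 + u.2) + a' • (z'.2 + u'.2) := by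
          simp only [Prod.fst_add, Prod.snd_add, Prod.smul_fst, Prod.smul_snd, smul_add]
          abel
        have e3 : (a • ((u, t) : (X × StrongDual ℝ X) × ℝ) + a' • (u', t')).2 = a * t + a' * t' := by
          simp only [Prod.snd_add, Prod.smul_snd, smul_eq_mul]
        rw [e1, e2, e3]
        set s1 : ℝ := ‖z.1 + u.1‖ with hs1
        set s2 : ℝ := ‖z.2 + u.2‖ with hs2
        set s1' : ℝ := ‖z'.1 + u'.1‖ with hs1'
        set s2' : ℝ := ‖z'.2 + u'.2‖ with hs2'
        set m1 : ℝ := ‖a • (z.1 + u.1) + a' • (z'.1 + u'.1)‖ with hm1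
        set m2 : ℝ := ‖a • (z.2 + u.2) + a' • (z'.2 + u'.2)‖ with hm2
        have hn1 : m1 ≤ a * s1 + a' * s1' := by
          rw [hm1, hs1, hs1']
          refine (norm_add_le _ _).trans ?_
          rw [norm_smul, norm_smul, Real.norm_eq_abs, Real.norm_eq_abs,
            abs_of_nonneg ha, abs_of_nonneg ha']
        have hn2 : m2 ≤ a * s2 + a' * s2' := by
          rw [hm2, hs2, hs2']
          refine (norm_add_le _ _).trans ?_
          rw [norm_smul, norm_smul, Real.norm_eq_abs, Real.norm_eq_abs,
            abs_of_nonneg ha, abs_of_nonneg ha']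
        exact convex_combo_lemma a a' c c' t t' s1 s2 s1' s2' m1 m2 ha ha' haa hn1 hn2
          (norm_nonneg _) (norm_nonneg _) (norm_nonneg _) (norm_nonneg _)
          (norm_nonneg _) (norm_nonneg _) hlt hlt'
    have hnm : (((0 : X × StrongDual ℝ X), -ε) : (X × StrongDual ℝ X) × ℝ) ∉ C := by
      rintro ⟨z, c, hzc, hlt⟩
      have h0 := step1 z c hzc
      simp only [Prod.fst_zero, Prod.snd_zero, add_zero] at hlt
      linarith
    obtain ⟨f, hf⟩ := geometric_hahn_banach_open_point hconv hopen hnm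
    set α : ℝ := f ((0 : X × StrongDual ℝ X), (1 : ℝ)) with hαdef
    have hfsplit : ∀ (u : X × StrongDual ℝ X) (t : ℝ), f (u, t) = f (u, 0) + t * α := by
      intro u t
      have e : ((u, t) : (X × StrongDual ℝ X) × ℝ)
          = (u, (0 : ℝ)) + t • ((0 : X × StrongDual ℝ X), (1 : ℝ)) := by
        simp [Prod.ext_iff]
      rw [e, map_add, map_smul, smul_eq_mul]
    have hf00 : f ((0 : X × StrongDual ℝ X), (0 : ℝ)) = 0 := by
      have : (((0 : X × StrongDual ℝ X), (0 : ℝ)) : (X × StrongDual ℝ X) × ℝ) = 0 := rfl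
      rw [this, map_zero]
    have hpoint : f ((0 : X × StrongDual ℝ X), -ε) = -ε * α := by
      rw [hfsplit, hf00, zero_add]
    -- membership of explicit points in C
    have hmemC : ∀ q ∈ B, ∀ (w : X × StrongDual ℝ X) (δ : ℝ), 0 < δ →
        (((w.1 - q.1, w.2 - q.2), q.2 q.1 + (‖w.1‖ ^ 2 / 2 + ‖w.2‖ ^ 2 / 2) + δ)
          : (X × StrongDual ℝ X) × ℝ) ∈ C := by
      intro q hq w δ hδ
      refine ⟨q, q.2 q.1, ?_, ?_⟩
      · intro q' hq'
        have h := hBmono q' hq' q hq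
        have e : (q'.2 - q.2) (q'.1 - q.1)
            = q'.2 q'.1 - q'.2 q.1 - q.2 q'.1 + q.2 q.1 := by
          simp [ContinuousLinearMap.sub_apply, map_sub]
          ring
        rw [e] at h
        linarith
      · have e1 : q.1 + (w.1 - q.1) = w.1 := by abel
        have e2 : q.2 + (w.2 - q.2) = w.2 := by abel
        simp only [e1, e2]
        linarith
    have hmaster : ∀ q ∈ B, ∀ (w : X × StrongDual ℝ X) (δ : ℝ), 0 < δ →
        f ((w.1 - q.1, w.2 - q.2), q.2 q.1 + (‖w.1‖ ^ 2 / 2 + ‖w.2‖ ^ 2 / 2) + δ) < -ε * α := by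
      intro q hq w δ hδ
      rw [← hpoint]
      exact hf _ (hmemC q hq w δ hδ)
    -- α < 0
    have hα0 : α < 0 := by
      by_contra hge
      push_neg at hge
      have hδpos : 0 < |bs b + (‖b‖ ^ 2 / 2 + ‖bs‖ ^ 2 / 2)| + 1 := by positivity
      have h := hmaster (b, bs) hq₀ (b, bs) _ hδpos
      simp only [sub_self, Prod.mk_zero_zero] at h
      rw [hfsplit] at h
      have h00 : f ((0 : X × StrongDual ℝ X), (0:ℝ)) = 0 := hf00
      rw [h00, zero_add] at h
      have hT0δ : 0 < bs b + (‖b‖ ^ 2 / 2 + ‖bs‖ ^ 2 / 2)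
          + (|bs b + (‖b‖ ^ 2 / 2 + ‖bs‖ ^ 2 / 2)| + 1) + ε := by
        have := neg_abs_le (bs b + (‖b‖ ^ 2 / 2 + ‖bs‖ ^ 2 / 2))
        linarith
      nlinarith [h, mul_nonneg hge hT0δ.le]
    -- normalize and define g1, g2
    have hαne : -α ≠ 0 := by intro hcon; rw [neg_eq_zero] at hcon; rw [hcon] at hα0; exact lt_irrefl 0 hα0
    have hβpos : (0:ℝ) < (-α)⁻¹ := inv_pos.mpr (by linarith)
    set F : ((X × StrongDual ℝ X) × ℝ) →L[ℝ] ℝ := (-α)⁻¹ • f with hFdef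
    have hFapp : ∀ p : (X × StrongDual ℝ X) × ℝ, F p = (-α)⁻¹ * f p := by
      intro p
      simp [hFdef]
    have hFsplit : ∀ (u : X × StrongDual ℝ X) (t : ℝ), F (u, t) = F (u, 0) - t := by
      intro u t
      rw [hFapp, hFapp, hfsplit]
      have hβα : (-α)⁻¹ * α = -1 := by
        rw [← neg_inv, neg_mul, inv_mul_cancel₀ (by linarith : α ≠ 0)]
      linear_combination t * hβα
    have hFpt : ∀ p ∈ C, F p < F ((0 : X × StrongDual ℝ X), -ε) := by
      intro p hp
      rw [hFapp, hFapp]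
      exact mul_lt_mul_of_pos_left (hf p hp) hβpos
    have hF00 : F ((0 : X × StrongDual ℝ X), (0 : ℝ)) = 0 := by
      rw [hFapp, hf00, mul_zero]
    have hFpoint : F ((0 : X × StrongDual ℝ X), -ε) = ε := by
      rw [hFsplit, hF00]
      ring
    set gA : StrongDual ℝ X :=
      ((F.comp (ContinuousLinearMap.inl ℝ (X × StrongDual ℝ X) ℝ)).comp
        (ContinuousLinearMap.inl ℝ X (StrongDual ℝ X))) with hgA
    set gB : StrongDual ℝ (StrongDual ℝ X) :=
      ((F.comp (ContinuousLinearMap.inl ℝ (X × StrongDual ℝ X) ℝ)).comp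
        (ContinuousLinearMap.inr ℝ X (StrongDual ℝ X))) with hgB
    have hgApp : ∀ (u1 : X) (u2 : StrongDual ℝ X), F ((u1, u2), (0 : ℝ)) = gA u1 + gB u2 := by
      intro u1 u2
      have e : (((u1, u2), (0 : ℝ)) : (X × StrongDual ℝ X) × ℝ)
          = ((u1, 0), (0 : ℝ)) + ((0, u2), (0 : ℝ)) := by
        simp [Prod.ext_iff]
      rw [e, map_add]
      rfl
    refine ⟨-gA, -gB, ?_⟩
    intro q hq v w
    have key : ∀ δ : ℝ, 0 < δ →
        (-gA) q.1 + (-gB) q.2 + (-gA) v + (-gB) w - q.2 q.1 - ‖v‖ ^ 2 / 2 - ‖w‖ ^ 2 / 2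
          < ε + δ := by
      intro δ hδ
      have h := hFpt _ (hmemC q hq (-v, -w) δ hδ)
      rw [hFpoint, hFsplit, hgApp] at h
      simp only [map_sub, map_neg, norm_neg] at h
      simp only [ContinuousLinearMap.neg_apply]
      linarith
    by_contra hcon
    push_neg at hcon
    have h2 := key (((-gA) q.1 + (-gB) q.2 + (-gA) v + (-gB) w - q.2 q.1
      - ‖v‖ ^ 2 / 2 - ‖w‖ ^ 2 / 2 - ε) / 2) (by linarith)
    linarith
  -- Step 3 : approximate solutions and uniform bounds
  choose g1 g2 hg using fun n : ℕ => step2 (1 / ((n : ℝ) + 1)) (by positivity)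
  set C₀ : ℝ := 1 + |bs b| + ‖b‖ + ‖bs‖ with hC₀def
  have habs0 : 0 ≤ |bs b| := abs_nonneg _
  have hnb : 0 ≤ ‖b‖ := norm_nonneg _
  have hnbs : 0 ≤ ‖bs‖ := norm_nonneg _
  have hC₀1 : 1 ≤ C₀ := by rw [hC₀def]; linarith
  have hbC : ‖b‖ ≤ C₀ := by rw [hC₀def]; linarith
  have hbsC : ‖bs‖ ≤ C₀ := by rw [hC₀def]; linarith
  have hbbC : |bs b| ≤ C₀ := by rw [hC₀def]; linarith
  have h1C : 1 + |bs b| ≤ C₀ := by rw [hC₀def]; linarith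
  clear_value C₀
  clear hC₀def
  have hbound : ∀ n : ℕ, ‖g1 n‖ ≤ 16 * C₀ + 1 ∧ ‖g2 n‖ ≤ 16 * C₀ + 1 := by
    intro n
    have hεn : (1 : ℝ) / ((n : ℝ) + 1) ≤ 1 := by
      rw [div_le_one (by positivity)]
      have : (0:ℝ) ≤ (n : ℝ) := Nat.cast_nonneg n
      linarith
    have hcs1 : |g1 n b| ≤ ‖g1 n‖ * ‖b‖ := by
      simpa [Real.norm_eq_abs] using (g1 n).le_opNorm b
    have hcs2 : |g2 n bs| ≤ ‖g2 n‖ * ‖bs‖ := by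
      simpa [Real.norm_eq_abs] using (g2 n).le_opNorm bs
    have hmul1 : ‖g1 n‖ * ‖b‖ ≤ ‖g1 n‖ * C₀ := mul_le_mul_of_nonneg_left hbC (norm_nonneg _)
    have hmul2 : ‖g2 n‖ * ‖bs‖ ≤ ‖g2 n‖ * C₀ := mul_le_mul_of_nonneg_left hbsC (norm_nonneg (g2 n))
    have hb1 := abs_le.mp hcs1
    have hb2 := abs_le.mp hcs2
    have hb4 := le_abs_self (bs b)
    have hD1 : ∀ v : X, g1 n v - ‖v‖ ^ 2 / 2 ≤ C₀ * (1 + ‖g1 n‖ + ‖g2 n‖) := by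
      intro v
      have h := hg n (b, bs) hq₀ v 0
      simp only [map_zero, norm_zero] at h
      linarith [h, hmul1, hmul2, hb1.1, hb2.1, hb4, h1C, hεn, hC₀1, hnb, hnbs]
    have hD2 : ∀ w : StrongDual ℝ X, g2 n w - ‖w‖ ^ 2 / 2 ≤ C₀ * (1 + ‖g1 n‖ + ‖g2 n‖) := by
      intro w
      have h := hg n (b, bs) hq₀ 0 w
      simp only [map_zero, norm_zero] at h
      linarith [h, hmul1, hmul2, hb1.1, hb2.1, hb4, h1C, hεn, hC₀1, hnb, hnbs]
    have hsq1 := aux_sq_norm (g1 n) _ hD1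
    have hsq2 := aux_sq_norm (g2 n) _ hD2
    exact bound_lemma _ _ _ hsq1 hsq2 (norm_nonneg _) (norm_nonneg (g2 n)) hC₀1
  -- Step 4 : weak-* cluster point
  set K : Set (WeakDual ℝ X × WeakDual ℝ (StrongDual ℝ X)) :=
    (WeakDual.toStrongDual ⁻¹' Metric.closedBall (0 : StrongDual ℝ X) (16 * C₀ + 1)) ×ˢ
      (WeakDual.toStrongDual ⁻¹' Metric.closedBall (0 : StrongDual ℝ (StrongDual ℝ X)) (16 * C₀ + 1))
    with hKdef
  have hcomp : IsCompact K :=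
    (WeakDual.isCompact_closedBall (𝕜 := ℝ) (E := X) 0 (16 * C₀ + 1)).prod
      (WeakDual.isCompact_closedBall (𝕜 := ℝ) (E := StrongDual ℝ X) 0 (16 * C₀ + 1))
  set seq : ℕ → WeakDual ℝ X × WeakDual ℝ (StrongDual ℝ X) :=
    fun n => (StrongDual.toWeakDual (g1 n), StrongDual.toWeakDual (g2 n)) with hseqdef
  have hseqK : ∀ n, seq n ∈ K := by
    intro n
    refine Set.mem_prod.mpr ⟨?_, ?_⟩
    · show WeakDual.toStrongDual (seq n).1 ∈ Metric.closedBall 0 (16 * C₀ + 1)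
      rw [mem_closedBall_zero_iff]
      exact (hbound n).1
    · show WeakDual.toStrongDual (seq n).2 ∈ Metric.closedBall 0 (16 * C₀ + 1)
      rw [Metric.mem_closedBall, dist_eq_norm (WeakDual.toStrongDual (seq n).2), sub_zero (WeakDual.toStrongDual (seq n).2)]
      exact (hbound n).2
  have hle : Filter.map seq Filter.atTop ≤ Filter.principal K :=
    Filter.le_principal_iff.mpr (Filter.mem_map.mpr (Filter.Eventually.of_forall hseqK))
  obtain ⟨L, hLK, hcl⟩ := hcomp.exists_clusterPt hle
  set ys : StrongDual ℝ X := WeakDual.toStrongDual L.1 with hysdef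
  set F2 : StrongDual ℝ (StrongDual ℝ X) := WeakDual.toStrongDual L.2 with hF2def
  have hlim : ∀ q ∈ B, ∀ (v : X) (w : StrongDual ℝ X),
      ys q.1 + F2 q.2 + ys v + F2 w ≤ q.2 q.1 + ‖v‖ ^ 2 / 2 + ‖w‖ ^ 2 / 2 := by
    intro q hq v w
    have hgc : Continuous fun p : WeakDual ℝ X × WeakDual ℝ (StrongDual ℝ X) =>
        p.1 q.1 + p.2 q.2 + p.1 v + p.2 w :=
      ((((WeakDual.eval_continuous q.1).comp continuous_fst).add
        ((WeakDual.eval_continuous q.2).comp continuous_snd)).add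
        ((WeakDual.eval_continuous v).comp continuous_fst)).add
        ((WeakDual.eval_continuous w).comp continuous_snd)
    have hsn : ∀ n : ℕ, (fun p : WeakDual ℝ X × WeakDual ℝ (StrongDual ℝ X) =>
        p.1 q.1 + p.2 q.2 + p.1 v + p.2 w) (seq n)
        ≤ (q.2 q.1 + ‖v‖ ^ 2 / 2 + ‖w‖ ^ 2 / 2) + 1 / ((n : ℝ) + 1) := by
      intro n
      have h := hg n q hq v w
      show g1 n q.1 + g2 n q.2 + g1 n v + g2 n w ≤ _
      linarith
    exact cluster_le seq L hcl _ hgc _ hsn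
  -- Step 5 : the limit pair is monotonically related
  have hC1 : ∀ q ∈ B, ys q.1 + F2 q.2 - q.2 q.1 + ‖ys‖ ^ 2 / 2 + ‖F2‖ ^ 2 / 2 ≤ 0 := by
    intro q hq
    have hx2 : ∀ w : StrongDual ℝ X, F2 w - ‖w‖ ^ 2 / 2
        ≤ q.2 q.1 - ys q.1 - F2 q.2 - ‖ys‖ ^ 2 / 2 := by
      intro w
      have hv : ∀ v : X, ys v - ‖v‖ ^ 2 / 2
          ≤ q.2 q.1 - ys q.1 - F2 q.2 - (F2 w - ‖w‖ ^ 2 / 2) := by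
        intro v
        have := hlim q hq v w
        linarith
      have := aux_sq_norm ys _ hv
      linarith
    have := aux_sq_norm F2 _ hx2
    linarith
  have hrel : ∀ q ∈ B, 0 ≤ (F2 - ι q.1) (ys - q.2) := by
    intro q hq
    have hcs : |F2 ys| ≤ ‖F2‖ * ‖ys‖ := by
      simpa [Real.norm_eq_abs] using F2.le_opNorm ys
    have e : (F2 - ι q.1) (ys - q.2) = F2 ys - F2 q.2 - ys q.1 + q.2 q.1 := by
      simp [hιdef, ContinuousLinearMap.sub_apply, NormedSpace.dual_def, map_sub]
      ring
    rw [e]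
    have h := hC1 q hq
    linarith [(abs_le.mp hcs).1, sq_nonneg (‖F2‖ - ‖ys‖), h]
  obtain ⟨a, ha, hmem⟩ := hBU F2 ys hrel
  have hnorm : ‖F2‖ = ‖a‖ := by
    rw [ha]
    exact (inclusionInDoubleDualLi ℝ (E := X)).norm_map a
  have hFy : F2 ys = ys a := by rw [ha]; rfl
  have hfin : ys a + ‖ys‖ ^ 2 / 2 + ‖a‖ ^ 2 / 2 ≤ 0 := by
    have h := hC1 (a, ys) hmem
    simp only at h
    rw [hFy, hnorm] at h
    linarith
  have hcs2 : |ys a| ≤ ‖ys‖ * ‖a‖ := by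
    simpa [Real.norm_eq_abs] using ys.le_opNorm a
  have hneq : ‖ys‖ = ‖a‖ := by
    have habs := abs_le.mp hcs2
    have hsq0 : (‖ys‖ - ‖a‖) ^ 2 ≤ 0 := by linarith [habs.1, hfin]
    have hsq : (‖ys‖ - ‖a‖) ^ 2 = 0 := le_antisymm hsq0 (sq_nonneg _)
    have := sq_eq_zero_iff.mp hsq
    linarith
  rw [hneq] at hfin hcs2
  have habs := abs_le.mp hcs2
  have hyv : ys a = -‖a‖ ^ 2 :=
    le_antisymm (by linarith [hfin]) (by linarith [habs.1])
  -- Conclusion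
  refine ⟨(a + x, ys + xs), hmem, ?_, ?_⟩
  · show ‖xs - (ys + xs)‖ = ‖x - (a + x)‖
    rw [show xs - (ys + xs) = -ys from by abel, show x - (a + x) = -a from by abel,
      norm_neg, norm_neg]
    exact hneq
  · show ‖x - (a + x)‖ ^ 2 + ‖xs - (ys + xs)‖ ^ 2 + 2 * (xs - (ys + xs)) (x - (a + x)) = 0
    rw [show xs - (ys + xs) = -ys from by abel, show x - (a + x) = -a from by abel,
      norm_neg, norm_neg]
    have e3 : (-ys : StrongDual ℝ X) (-a) = ys a := by
      simp
    rw [e3, hneq, hyv]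
    ring
end

section
/- Let X be a real Banach space and let A : X ⇉ X* be ultramaximally monotone. Then A is of type (NA): for every (x, x*) ∈ (X × X*) \ gra A there exists (a, a*) ∈ gra A with a ≠ x, a* ≠ x*, and ⟨x − a, x* − a*⟩ = −‖x − a‖·‖x* − a*‖. -/
open Pointwise Set NormedSpace

variable {X : Type*} [NormedAddCommGroup X] [NormedSpace ℝ X]

namespace NAaux

lemma exists_near_norm {Y : Type*} [NormedAddCommGroup Y] [NormedSpace ℝ Y]
    (f : Y →L[ℝ] ℝ) {ε : ℝ} (hε : 0 < ε) :
    ∃ v : Y, ‖v‖ ≤ 1 ∧ ‖f‖ - ε < f v := by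
  rcases lt_or_ge (‖f‖ - ε) 0 with h | h
  · exact ⟨0, by simp, by simpa using h⟩
  · have h2 : ‖f‖ - ε < ‖f‖ := by linarith
    obtain ⟨v, hv1, hv2⟩ := f.exists_lt_apply_of_lt_opNorm h2
    rcases le_or_gt (f v) 0 with h3 | h3
    · refine ⟨-v, by simpa using hv1.le, ?_⟩
      have habs : ‖f v‖ = -(f v) := by
        rw [Real.norm_eq_abs, abs_of_nonpos h3]
      simp only [map_neg]
      linarith
    · refine ⟨v, hv1.le, ?_⟩
      rwa [Real.norm_eq_abs, abs_of_pos h3] at hv2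

lemma norm_sq_convex {Y : Type*} [SeminormedAddCommGroup Y] [NormedSpace ℝ Y]
    (x y : Y) {a b : ℝ} (ha : 0 ≤ a) (hb : 0 ≤ b) (hab : a + b = 1) :
    ‖a • x + b • y‖ ^ 2 / 2 ≤ a * (‖x‖ ^ 2 / 2) + b * (‖y‖ ^ 2 / 2) := by
  have h1 : ‖a • x + b • y‖ ≤ a * ‖x‖ + b * ‖y‖ := by
    refine (norm_add_le _ _).trans ?_
    rw [norm_smul, norm_smul, Real.norm_of_nonneg ha, Real.norm_of_nonneg hb]
  have h0 : (0:ℝ) ≤ ‖a • x + b • y‖ := norm_nonneg _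
  nlinarith [mul_nonneg (mul_nonneg ha hb) (sq_nonneg (‖x‖ - ‖y‖)), norm_nonneg x, norm_nonneg y]

lemma pairing_expand (xss : StrongDual ℝ (StrongDual ℝ X)) (xs : StrongDual ℝ X) (a : X) (as : StrongDual ℝ X) :
    (xss - inclusionInDoubleDual ℝ X a) (xs - as)
      = xss xs - xss as - xs a + as a := by
  simp only [ContinuousLinearMap.sub_apply, map_sub, NormedSpace.dual_def]
  ring

lemma apply_ge_neg_j (y : X) (ys : StrongDual ℝ X) :
    -(‖y‖ ^ 2 / 2 + ‖ys‖ ^ 2 / 2) ≤ ys y := by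
  have h1 : ‖ys y‖ ≤ ‖ys‖ * ‖y‖ := ys.le_opNorm y
  have h2 : -(ys y) ≤ ‖ys y‖ := neg_le_abs _
  nlinarith [sq_nonneg (‖ys‖ - ‖y‖)]

set_option maxHeartbeats 1000000 in
lemma key (A : Set (X × StrongDual ℝ X)) (hA : IsUltraMaxMonotone A)
    (h0 : ((0 : X), (0 : StrongDual ℝ X)) ∉ A) :
    ∃ p ∈ A, p.1 ≠ 0 ∧ p.2 ≠ 0 ∧ p.2 p.1 = -(‖p.1‖ * ‖p.2‖) := by
  classical
  obtain ⟨hmono, hultra⟩ := hA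
  -- A is nonempty
  have hne : A.Nonempty := by
    rcases A.eq_empty_or_nonempty with h | h
    · obtain ⟨u, -, huA⟩ := hultra 0 0 (by intro p hp; rw [h] at hp; exact absurd hp (notMem_empty p))
      rw [h] at huA; exact absurd huA (notMem_empty _)
    · exact h
  obtain ⟨p₀, hp₀⟩ := hne
  -- injectivity of the canonical embedding
  have hinj : Function.Injective (inclusionInDoubleDual ℝ X) := by
    intro u v huv
    exact (inclusionInDoubleDualLi ℝ (E := X)).injective huv
  have hnormι : ∀ u : X, ‖inclusionInDoubleDual ℝ X u‖ = ‖u‖ := by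
    intro u
    exact (inclusionInDoubleDualLi ℝ (E := X)).norm_map u
  -- maximality in X × X*
  have hmax : ∀ (y : X) (ys : StrongDual ℝ X),
      (∀ p ∈ A, 0 ≤ (ys - p.2) (y - p.1)) → (y, ys) ∈ A := by
    intro y ys h
    obtain ⟨u, hu, huA⟩ := hultra (inclusionInDoubleDual ℝ X y) ys (by
      intro p hp
      have h1 := h p hp
      rw [pairing_expand]
      simp only [ContinuousLinearMap.sub_apply, map_sub, NormedSpace.dual_def] at h1 ⊢
      linarith)
    have : y = u := hinj hu
    subst this
    exact huA
  -- the two convex sets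
  set U : Set ((X × StrongDual ℝ X) × ℝ) :=
    {q | q.2 + (‖q.1.1‖ ^ 2 / 2 + ‖q.1.2‖ ^ 2 / 2) < 0} with hU_def
  set V : Set ((X × StrongDual ℝ X) × ℝ) :=
    {q | ∀ p ∈ A, p.2 q.1.1 + q.1.2 p.1 - p.2 p.1 ≤ q.2} with hV_def
  have hUopen : IsOpen U := by
    have hcont : Continuous fun q : (X × StrongDual ℝ X) × ℝ =>
        q.2 + (‖q.1.1‖ ^ 2 / 2 + ‖q.1.2‖ ^ 2 / 2) := by fun_prop
    exact isOpen_lt hcont continuous_const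
  have hUconv : Convex ℝ U := by
    rintro ⟨e₁, t₁⟩ h1 ⟨e₂, t₂⟩ h2 a b ha hb hab
    simp only [hU_def, mem_setOf_eq] at h1 h2 ⊢
    have c1 := norm_sq_convex e₁.1 e₂.1 ha hb hab
    have c2 := norm_sq_convex e₁.2 e₂.2 ha hb hab
    simp only [Prod.smul_mk, Prod.mk_add_mk, smul_eq_mul]
    simp only [Prod.smul_fst, Prod.smul_snd, Prod.fst_add, Prod.snd_add]
    have hcomb : a * (t₁ + (‖e₁.1‖ ^ 2 / 2 + ‖e₁.2‖ ^ 2 / 2))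
        + b * (t₂ + (‖e₂.1‖ ^ 2 / 2 + ‖e₂.2‖ ^ 2 / 2)) < 0 := by
      rcases eq_or_lt_of_le ha with h | ha'
      · have hb1 : b = 1 := by linarith
        rw [← h, hb1]; nlinarith
      · nlinarith [mul_nonpos_of_nonneg_of_nonpos hb h2.le, mul_pos ha' (neg_pos.mpr h1)]
    linarith
  have hVconv : Convex ℝ V := by
    rintro ⟨e₁, t₁⟩ h1 ⟨e₂, t₂⟩ h2 a b ha hb hab
    simp only [hV_def, mem_setOf_eq] at h1 h2 ⊢
    intro p hp
    have k1 := h1 p hp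
    have k2 := h2 p hp
    simp only [Prod.smul_mk, Prod.mk_add_mk, smul_eq_mul, Prod.smul_fst, Prod.smul_snd,
      Prod.fst_add, Prod.snd_add, map_add, map_smul, smul_eq_mul,
      ContinuousLinearMap.add_apply, ContinuousLinearMap.coe_smul', Pi.smul_apply]
    have m1 := mul_le_mul_of_nonneg_left k1 ha
    have m2 := mul_le_mul_of_nonneg_left k2 hb
    have hsum : a * (p.2 p.1) + b * (p.2 p.1) = p.2 p.1 := by
      rw [← add_mul, hab, one_mul]
    nlinarith [m1, m2, hsum]
  have hdisj : Disjoint U V := by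
    rw [Set.disjoint_left]
    rintro ⟨⟨y, ys⟩, t⟩ hU hV
    simp only [hU_def, mem_setOf_eq] at hU
    simp only [hV_def, mem_setOf_eq] at hV
    have hlow : -(‖y‖ ^ 2 / 2 + ‖ys‖ ^ 2 / 2) ≤ ys y := apply_ge_neg_j y ys
    by_cases hc : ∀ p ∈ A, 0 ≤ (ys - p.2) (y - p.1)
    · have hin := hmax y ys hc
      have := hV (y, ys) hin
      simp only at this
      linarith
    · push_neg at hc
      obtain ⟨p, hp, hlt⟩ := hc
      have hVp := hV p hp
      simp only [ContinuousLinearMap.sub_apply, map_sub] at hlt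
      linarith
  -- separating functional
  obtain ⟨φ, c, hφU, hφV⟩ := geometric_hahn_banach_open hUconv hUopen hVconv hdisj
  obtain ⟨z₀, hz₀⟩ : ∃ z₀ : (X × StrongDual ℝ X) →L[ℝ] ℝ, ∀ e, z₀ e = φ (e, 0) :=
    ⟨φ.comp (ContinuousLinearMap.inl ℝ (X × StrongDual ℝ X) ℝ), fun e => rfl⟩
  obtain ⟨β, hβ⟩ : ∃ β : ℝ, β = φ ((0 : X × StrongDual ℝ X), (1 : ℝ)) := ⟨_, rfl⟩
  have hsplit : ∀ (e : X × StrongDual ℝ X) (t : ℝ), φ (e, t) = z₀ e + t * β := by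
    intro e t
    have he : ((e, t) : (X × StrongDual ℝ X) × ℝ) = (e, 0) + t • ((0 : X × StrongDual ℝ X), (1 : ℝ)) := by
      simp [Prod.ext_iff]
    rw [he, map_add, map_smul, hz₀, hβ, smul_eq_mul]
  have hUmem : ∀ (e : X × StrongDual ℝ X) (t : ℝ),
      t + (‖e.1‖ ^ 2 / 2 + ‖e.2‖ ^ 2 / 2) < 0 → z₀ e + t * β < c := by
    intro e t ht
    have := hφU (e, t) ht
    rwa [hsplit] at this
  have hVmem : ∀ p ∈ A, c ≤ z₀ (p.1, p.2) + (p.2 p.1) * β := by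
    intro p hp
    have hpV : ((p.1, p.2), p.2 p.1) ∈ V := by
      simp only [hV_def, mem_setOf_eq]
      intro q hq
      have := hmono p hp q hq
      simp only [ContinuousLinearMap.sub_apply, map_sub] at this
      linarith
    have := hφV _ hpV
    rwa [hsplit] at this
  -- β > 0
  have hβpos : 0 < β := by
    rcases lt_trichotomy β 0 with h | h | h
    · -- β < 0
      have h1 := hUmem 0 (min (c / β) (-1)) (by
        simp only [Prod.fst_zero, Prod.snd_zero, norm_zero]
        have h9 : min (c / β) (-1) ≤ -1 := min_le_right _ _
        nlinarith)
      have h2 : min (c / β) (-1) ≤ c / β := min_le_left _ _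
      have h3 : c ≤ min (c / β) (-1) * β := (le_div_iff_of_neg h).mp h2
      simp only [map_zero, zero_add] at h1
      linarith
    · -- β = 0
      exfalso
      have hz₀lt : ∀ e : X × StrongDual ℝ X, z₀ e < c := by
        intro e
        have := hUmem e (-(‖e.1‖ ^ 2 / 2 + ‖e.2‖ ^ 2 / 2) - 1) (by linarith)
        rw [h] at this
        simpa using this
      have hc0 : (0:ℝ) < c := by
        have := hz₀lt 0
        simpa using this
      have hz₀zero : ∀ e : X × StrongDual ℝ X, z₀ e = 0 := by
        intro e
        by_contra hne0
        have := hz₀lt ((2 * c / z₀ e) • e)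
        rw [map_smul, smul_eq_mul, div_mul_cancel₀ _ hne0] at this
        linarith
      have hVbound := hVmem p₀ hp₀
      rw [h, hz₀zero] at hVbound
      simp only [mul_zero, zero_add] at hVbound
      linarith
    · exact h
  have hβne : β ≠ 0 := ne_of_gt hβpos
  -- the dual pair
  obtain ⟨zs, hzs⟩ : ∃ zs : StrongDual ℝ X, ∀ y, zs y = -β⁻¹ * z₀ (y, 0) :=
    ⟨(-β⁻¹) • (z₀.comp (ContinuousLinearMap.inl ℝ X (StrongDual ℝ X))), fun y => by
      simp [ContinuousLinearMap.comp_apply]⟩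
  obtain ⟨zss, hzss⟩ : ∃ zss : StrongDual ℝ (StrongDual ℝ X), ∀ ys, zss ys = -β⁻¹ * z₀ (0, ys) :=
    ⟨(-β⁻¹) • (z₀.comp (ContinuousLinearMap.inr ℝ X (StrongDual ℝ X))), fun ys => by
      simp [ContinuousLinearMap.comp_apply]⟩
  have hz₀eq : ∀ (y : X) (ys : StrongDual ℝ X), z₀ (y, ys) = -β * (zs y + zss ys) := by
    intro y ys
    have hsum : z₀ (y, ys) = z₀ (y, 0) + z₀ (0, ys) := by
      rw [← map_add]
      norm_num
    rw [hsum, hzs, hzss]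
    field_simp
    ring
  obtain ⟨d, hd⟩ : ∃ d : ℝ, d = c / β := ⟨_, rfl⟩
  have hc : c = d * β := by
    rw [hd]; field_simp
  -- (α)
  have halpha : ∀ (y : X) (ys : StrongDual ℝ X),
      -(zs y) - zss ys ≤ d + (‖y‖ ^ 2 / 2 + ‖ys‖ ^ 2 / 2) := by
    intro y ys
    refine le_of_forall_pos_le_add ?_
    intro ε hε
    have h1 := hUmem (y, ys) (-(‖y‖ ^ 2 / 2 + ‖ys‖ ^ 2 / 2) - ε) (by simp only; linarith)
    rw [hz₀eq] at h1
    have h2 : (-(zs y) - zss ys) * β < (d + (‖y‖ ^ 2 / 2 + ‖ys‖ ^ 2 / 2) + ε) * β := by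
      nlinarith [h1, hc]
    linarith [(mul_lt_mul_iff_of_pos_right hβpos).mp h2]
  -- (γ)
  have hgamma : ∀ p ∈ A, zs p.1 + zss p.2 - p.2 p.1 ≤ -d := by
    intro p hp
    have h1 := hVmem p hp
    rw [hz₀eq] at h1
    have h2 : (zs p.1 + zss p.2 - p.2 p.1) * β ≤ (-d) * β := by
      nlinarith [h1, hc]
    exact (mul_le_mul_iff_of_pos_right hβpos).mp h2
  -- half-norms bound
  have hnorm : ‖zs‖ ^ 2 / 2 + ‖zss‖ ^ 2 / 2 ≤ d := by
    have key2 : ∀ t s : ℝ, 0 ≤ t → 0 ≤ s →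
        t * ‖zs‖ + s * ‖zss‖ ≤ d + (t ^ 2 / 2 + s ^ 2 / 2) := by
      intro t s ht hs
      refine le_of_forall_pos_le_add ?_
      intro ε hε
      have hδ : 0 < ε / (t + s + 1) := by positivity
      obtain ⟨v, hv1, hv2⟩ := exists_near_norm (-zs) hδ
      obtain ⟨w, hw1, hw2⟩ := exists_near_norm (-zss) hδ
      rw [norm_neg, ContinuousLinearMap.neg_apply] at hv2 hw2
      have hga := halpha (t • v) (s • w)
      rw [map_smul, map_smul, smul_eq_mul, smul_eq_mul] at hga
      have hv3 : t * ‖zs‖ ≤ -(t * zs v) + t * (ε / (t + s + 1)) := by nlinarith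
      have hw3 : s * ‖zss‖ ≤ -(s * zss w) + s * (ε / (t + s + 1)) := by nlinarith
      have hnv : ‖t • v‖ ≤ t := by
        rw [norm_smul, Real.norm_of_nonneg ht]
        nlinarith
      have hnw : ‖s • w‖ ≤ s := by
        rw [norm_smul, Real.norm_of_nonneg hs]
        nlinarith
      have hj1 : ‖t • v‖ ^ 2 / 2 ≤ t ^ 2 / 2 := by nlinarith [norm_nonneg (t • v)]
      have hj2 : ‖s • w‖ ^ 2 / 2 ≤ s ^ 2 / 2 := by nlinarith [norm_nonneg (s • w)]
      have hfrac : (t + s) * (ε / (t + s + 1)) ≤ ε := by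
        rw [← mul_div_assoc, div_le_iff₀ (by positivity : (0:ℝ) < t + s + 1)]
        nlinarith
      nlinarith
    have := key2 ‖zs‖ ‖zss‖ (norm_nonneg _) (by positivity)
    nlinarith
  obtain ⟨t₀, ht₀⟩ : ∃ t₀ : ℝ, t₀ = -(‖zs‖ ^ 2 / 2 + ‖zss‖ ^ 2 / 2) := ⟨_, rfl⟩
  have hgam : ∀ p ∈ A, zs p.1 + zss p.2 - p.2 p.1 ≤ t₀ := by
    intro p hp
    have := hgamma p hp
    rw [ht₀]
    linarith
  -- first use of ultramaximality : zss zs ≤ t₀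
  have hle : zss zs ≤ t₀ := by
    by_contra hgt
    push_neg at hgt
    have hrel : ∀ p ∈ A, 0 ≤ (zss - inclusionInDoubleDual ℝ X p.1) (zs - p.2) := by
      intro p hp
      rw [pairing_expand]
      have := hgam p hp
      linarith
    obtain ⟨u, hu, huA⟩ := hultra zss zs hrel
    have h1 := hgam (u, zs) huA
    simp only at h1
    have h2 : zss zs = zs u := by
      rw [hu, NormedSpace.dual_def]
    linarith
  have hlow : -(‖zss‖ * ‖zs‖) ≤ zss zs := by
    have h1 : ‖zss zs‖ ≤ ‖zss‖ * ‖zs‖ := zss.le_opNorm zs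
    have h2 := neg_abs_le (zss zs)
    have h3 : |zss zs| = ‖zss zs‖ := (Real.norm_eq_abs _).symm
    linarith
  have hnorms_eq : ‖zs‖ = ‖zss‖ := by
    have h4 : -(‖zss‖ * ‖zs‖) ≤ t₀ := le_trans hlow hle
    rw [ht₀] at h4
    nlinarith [sq_nonneg (‖zs‖ - ‖zss‖)]
  have hpair_eq : zss zs = t₀ := by
    have h1 : t₀ ≤ zss zs := by
      rw [ht₀]
      nlinarith [hlow, sq_nonneg (‖zs‖ - ‖zss‖)]
    linarith
  -- second use of ultramaximality
  have hrel2 : ∀ p ∈ A, 0 ≤ (zss - inclusionInDoubleDual ℝ X p.1) (zs - p.2) := by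
    intro p hp
    rw [pairing_expand]
    have := hgam p hp
    linarith
  obtain ⟨u, hu, huA⟩ := hultra zss zs hrel2
  have hnu : ‖u‖ = ‖zss‖ := by
    rw [← hnormι u, ← hu]
  have hval : zs u = -(‖u‖ * ‖zs‖) := by
    have h2 : zss zs = zs u := by rw [hu, NormedSpace.dual_def]
    rw [← h2, hpair_eq, ht₀, hnu, ← hnorms_eq]
    ring
  have hune : u ≠ 0 := by
    intro h
    rw [h] at hnu
    simp only [norm_zero] at hnu
    have hzs0 : ‖zs‖ = 0 := by rw [hnorms_eq, ← hnu]
    have hz : zs = 0 := norm_eq_zero.mp hzs0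
    rw [h, hz] at huA
    exact h0 huA
  have hzsne : zs ≠ 0 := by
    intro h
    have hn0 : ‖u‖ = 0 := by
      rw [hnu, ← hnorms_eq, h, norm_zero]
    have hu0 : u = 0 := norm_eq_zero.mp hn0
    rw [hu0, h] at huA
    exact h0 huA
  exact ⟨(u, zs), huA, hune, hzsne, hval⟩

lemma translate (A : Set (X × StrongDual ℝ X)) (hA : IsUltraMaxMonotone A) (x : X) (xs : StrongDual ℝ X) :
    IsUltraMaxMonotone ((fun p : X × StrongDual ℝ X => (p.1 - x, p.2 - xs)) '' A) := by
  obtain ⟨hmono, hultra⟩ := hA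
  constructor
  · rintro p' ⟨p, hp, rfl⟩ q' ⟨q, hq, rfl⟩
    have := hmono p hp q hq
    simp only [sub_sub_sub_cancel_right]
    exact this
  · intro xss ys h
    obtain ⟨u, hu, huA⟩ := hultra (xss + inclusionInDoubleDual ℝ X x) (ys + xs) (by
      intro p hp
      have h1 := h (p.1 - x, p.2 - xs) ⟨p, hp, rfl⟩
      have he1 : xss - inclusionInDoubleDual ℝ X (p.1 - x)
          = xss + inclusionInDoubleDual ℝ X x - inclusionInDoubleDual ℝ X p.1 := by
        rw [map_sub]; abel
      have he2 : ys - (p.2 - xs) = ys + xs - p.2 := by abel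
      rw [he1, he2] at h1
      exact h1)
    refine ⟨u - x, ?_, ⟨(u, ys + xs), huA, ?_⟩⟩
    · rw [map_sub, ← hu]; abel
    · simp

end NAaux

theorem stmt12 [CompleteSpace X] (A : Set (X × StrongDual ℝ X)) (hA : IsUltraMaxMonotone A) :
    ∀ (x : X) (xs : StrongDual ℝ X), (x, xs) ∉ A →
      ∃ p ∈ A, p.1 ≠ x ∧ p.2 ≠ xs ∧
        (xs - p.2) (x - p.1) = -(‖x - p.1‖ * ‖xs - p.2‖) := by
  intro x xs hx
  have hA' := NAaux.translate A hA x xs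
  have h0 : ((0 : X), (0 : StrongDual ℝ X)) ∉ (fun p : X × StrongDual ℝ X => (p.1 - x, p.2 - xs)) '' A := by
    rintro ⟨p, hp, hpe⟩
    rw [Prod.ext_iff] at hpe
    obtain ⟨h1, h2⟩ := hpe
    have hp1 : p.1 = x := sub_eq_zero.mp h1
    have hp2 : p.2 = xs := sub_eq_zero.mp h2
    have hpx : p = (x, xs) := Prod.ext hp1 hp2
    rw [hpx] at hp
    exact hx hp
  obtain ⟨p', hp', hne1, hne2, hval⟩ := NAaux.key _ hA' h0
  obtain ⟨p, hp, rfl⟩ := hp'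
  refine ⟨p, hp, ?_, ?_, ?_⟩
  · intro h; exact hne1 (by simp [h])
  · intro h; exact hne2 (by simp [h])
  · have e1 : x - p.1 = -(p.1 - x) := by abel
    have e2 : xs - p.2 = -(p.2 - xs) := by abel
    rw [e1, e2, ContinuousLinearMap.neg_apply, map_neg, neg_neg, norm_neg, norm_neg]
    exact hval
end

section
/- Let X be a real Banach space and let f : X → (−∞, +∞] be proper, lower semicontinuous and convex with int(dom f) ≠ ∅. If the subdifferential operator ∂f is ultramaximally monotone, then X is reflexive (i.e., the canonical embedding of X into X** is surjective). -/
open Pointwise Set NormedSpace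

variable {X : Type*} [NormedAddCommGroup X] [NormedSpace ℝ X]

section MyAux
set_option linter.unusedVariables false
set_option linter.unusedSectionVars false
open Metric in
section
variable {E : Type*} [NormedAddCommGroup E] [NormedSpace ℝ E]

lemma myEkeland [CompleteSpace E] (h : E → EReal) (hlsc : LowerSemicontinuous h)
    (C : ℝ) (hC : ∀ w, (C : EReal) ≤ h w) (u : E) (hu : h u ≠ ⊤) {ε : ℝ} (hε : 0 < ε) :
    ∃ v, h v ≠ ⊤ ∧ ∀ w, h v ≤ h w + ((ε * ‖w - v‖ : ℝ) : EReal) := by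
  have hbot : ∀ w, h w ≠ ⊥ := by
    intro w hw
    have := hC w
    rw [hw] at this
    simp at this
  set S : E → Set E := fun x => {w | h w + ((ε * ‖w - x‖ : ℝ) : EReal) ≤ h x} with hS
  have hself : ∀ x, x ∈ S x := by
    intro x; simp only [hS, mem_setOf_eq, sub_self, norm_zero, mul_zero, EReal.coe_zero, add_zero,
      le_refl]
  have hmemle : ∀ x w, w ∈ S x → h w ≤ h x := by
    intro x w hw
    refine le_trans ?_ hw
    calc h w = h w + 0 := (add_zero _).symm
    _ ≤ h w + ((ε * ‖w - x‖ : ℝ) : EReal) := by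
        refine add_le_add_right ?_ _
        exact_mod_cast mul_nonneg hε.le (norm_nonneg _)
  have htrans : ∀ x w v, w ∈ S x → v ∈ S w → v ∈ S x := by
    intro x w v hw hv
    have h1 : (↑(ε * ‖v - x‖) : EReal) ≤ (↑(ε * ‖v - w‖) : EReal) + (↑(ε * ‖w - x‖) : EReal) := by
      rw [← EReal.coe_add, EReal.coe_le_coe_iff, ← mul_add]
      have := norm_sub_le_norm_sub_add_norm_sub v w x
      nlinarith [norm_nonneg (v - w), norm_nonneg (w - x)]
    calc h v + ((ε * ‖v - x‖ : ℝ) : EReal)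
        ≤ h v + (((ε * ‖v - w‖ : ℝ) : EReal) + ((ε * ‖w - x‖ : ℝ) : EReal)) :=
          add_le_add_right h1 _
      _ = (h v + ((ε * ‖v - w‖ : ℝ) : EReal)) + ((ε * ‖w - x‖ : ℝ) : EReal) := (add_assoc _ _ _).symm
      _ ≤ h w + ((ε * ‖w - x‖ : ℝ) : EReal) := add_le_add_left hv _
      _ ≤ h x := hw
  -- the inf over S x
  have hinf_le : ∀ x, (⨅ w : S x, h w) ≤ h x := fun x => iInf_le _ (⟨x, hself x⟩ : S x)
  have hinf_ge : ∀ x, (C : EReal) ≤ ⨅ w : S x, h w := fun x => le_iInf fun w => hC _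
  have step : ∀ (n : ℕ) (x : E), h x ≠ ⊤ →
      ∃ w, w ∈ S x ∧ h w ≤ (⨅ w' : S x, h w') + ((((n : ℝ) + 1)⁻¹ : ℝ) : EReal) := by
    intro n x hx
    have hne : (⨅ w' : S x, h w') ≠ ⊤ := ne_top_of_le_ne_top hx (hinf_le x)
    have hnb : (⨅ w' : S x, h w') ≠ ⊥ := by
      intro hb
      have := hinf_ge x
      rw [hb] at this
      simp at this
    have hlt : (⨅ w' : S x, h w') < (⨅ w' : S x, h w') + ((((n : ℝ) + 1)⁻¹ : ℝ) : EReal) := by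
      conv_lhs => rw [← EReal.coe_toReal hne hnb]
      conv_rhs => rw [← EReal.coe_toReal hne hnb]
      rw [← EReal.coe_add, EReal.coe_lt_coe_iff]
      have : (0:ℝ) < ((n : ℝ) + 1)⁻¹ := by positivity
      linarith
    obtain ⟨⟨w, hwS⟩, hw⟩ := iInf_lt_iff.mp hlt
    exact ⟨w, hwS, hw.le⟩
  classical
  -- build the sequence
  let next : ℕ → {x : E // h x ≠ ⊤} → {x : E // h x ≠ ⊤} := fun n x =>
    ⟨(step n x.1 x.2).choose,
      ne_top_of_le_ne_top x.2 (hmemle _ _ (step n x.1 x.2).choose_spec.1)⟩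
  let seq : ℕ → {x : E // h x ≠ ⊤} := fun n => Nat.rec ⟨u, hu⟩ next n
  have hseq_succ : ∀ n, seq (n + 1) = next n (seq n) := fun n => rfl
  have hmem : ∀ n, (seq (n + 1)).1 ∈ S (seq n).1 := fun n =>
    (step n (seq n).1 (seq n).2).choose_spec.1
  have hbound : ∀ n, h (seq (n + 1)).1 ≤ (⨅ w : S (seq n).1, h w) + ((((n : ℝ) + 1)⁻¹ : ℝ) : EReal) :=
    fun n => (step n (seq n).1 (seq n).2).choose_spec.2
  have hchain : ∀ n m, n ≤ m → (seq m).1 ∈ S (seq n).1 := by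
    intro n m hnm
    induction m, hnm using Nat.le_induction with
    | base => exact hself _
    | succ m hnm ih => exact htrans _ _ _ ih (hmem m)
  set r : ℕ → ℝ := fun n => (h (seq n).1).toReal with hr
  have hcoe_r : ∀ n, ((r n : ℝ) : EReal) = h (seq n).1 := fun n =>
    EReal.coe_toReal (seq n).2 (hbot _)
  have hrC : ∀ n, C ≤ r n := by
    intro n; rw [← EReal.coe_le_coe_iff, hcoe_r n]; exact hC _
  have hkey : ∀ n m, n ≤ m → r m + ε * ‖(seq m).1 - (seq n).1‖ ≤ r n := by
    intro n m hnm
    have := hchain n m hnm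
    rw [hS, mem_setOf_eq, ← hcoe_r m, ← hcoe_r n, ← EReal.coe_add, EReal.coe_le_coe_iff] at this
    exact this
  have hrmono : ∀ n m, n ≤ m → r m ≤ r n := by
    intro n m hnm
    have := hkey n m hnm
    nlinarith [mul_nonneg hε.le (norm_nonneg ((seq m).1 - (seq n).1))]
  have hant : Antitone r := fun n m hnm => hrmono n m hnm
  have hbdd : BddBelow (Set.range r) := ⟨C, by rintro _ ⟨n, rfl⟩; exact hrC n⟩
  set L : ℝ := ⨅ n, r n with hL
  have hrL : Filter.Tendsto r Filter.atTop (nhds L) := tendsto_atTop_ciInf hant hbdd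
  have hLle : ∀ n, L ≤ r n := fun n => ciInf_le hbdd n
  -- Cauchy
  have hcauchy : CauchySeq (fun n => (seq n).1) := by
    apply cauchySeq_of_le_tendsto_0 (fun N => (r N - L) / ε)
    · intro n m N hn hm
      rcases le_total n m with hnm | hmn
      · rw [dist_eq_norm]
        have h1 := hkey n m hnm
        have h2 := hLle m
        have h3 := hrmono N n hn
        have : ‖(seq n).1 - (seq m).1‖ = ‖(seq m).1 - (seq n).1‖ := norm_sub_rev _ _
        rw [this, le_div_iff₀ hε]
        nlinarith
      · rw [dist_eq_norm]
        have h1 := hkey m n hmn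
        have h2 := hLle n
        have h3 := hrmono N m hm
        rw [le_div_iff₀ hε]
        nlinarith
    · have : Filter.Tendsto (fun N => (r N - L) / ε) Filter.atTop (nhds ((L - L) / ε)) :=
        ((hrL.sub_const L).div_const ε)
      simpa using this
  obtain ⟨v, hv_lim⟩ := cauchySeq_tendsto_of_complete hcauchy
  -- h v ≤ L
  have hvL : h v ≤ (L : EReal) := by
    by_contra hcon
    push_neg at hcon
    obtain ⟨y, hy1, hy2⟩ := EReal.exists_between_coe_real hcon
    have hev : ∀ᶠ x' in nhds v, (y : EReal) < h x' := hlsc v _ hy2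
    have hev2 : ∀ᶠ n in Filter.atTop, (y : EReal) < h (seq n).1 := hv_lim.eventually hev
    have hev3 : ∀ᶠ n in Filter.atTop, y ≤ r n := by
      filter_upwards [hev2] with n hn
      rw [← hcoe_r n, EReal.coe_lt_coe_iff] at hn
      exact hn.le
    have : y ≤ L := ge_of_tendsto hrL hev3
    rw [EReal.coe_lt_coe_iff] at hy1
    linarith
  have hvtop : h v ≠ ⊤ := ne_top_of_le_ne_top (by simp) hvL
  -- v ∈ S (seq n) in the quantitative sense
  have hvS : ∀ n, h v + ((ε * ‖v - (seq n).1‖ : ℝ) : EReal) ≤ h (seq n).1 := by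
    intro n
    have hlim : Filter.Tendsto (fun m => r m + ε * ‖(seq m).1 - (seq n).1‖) Filter.atTop
        (nhds (L + ε * ‖v - (seq n).1‖)) := by
      apply Filter.Tendsto.add hrL
      exact (Filter.Tendsto.norm ((hv_lim.sub_const _))).const_mul ε
    have hle : L + ε * ‖v - (seq n).1‖ ≤ r n := by
      apply le_of_tendsto hlim
      filter_upwards [Filter.eventually_ge_atTop n] with m hm
      exact hkey n m hm
    calc h v + ((ε * ‖v - (seq n).1‖ : ℝ) : EReal)
        ≤ (L : EReal) + ((ε * ‖v - (seq n).1‖ : ℝ) : EReal) := add_le_add_left hvL _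
      _ = ((L + ε * ‖v - (seq n).1‖ : ℝ) : EReal) := by rw [EReal.coe_add]
      _ ≤ ((r n : ℝ) : EReal) := by exact_mod_cast hle
      _ = h (seq n).1 := hcoe_r n
  refine ⟨v, hvtop, ?_⟩
  intro w
  by_contra hcon
  push_neg at hcon
  have hwtop : h w ≠ ⊤ := by
    intro hw
    rw [hw, EReal.top_add_coe] at hcon
    exact not_top_lt hcon
  have hwS : ∀ n, w ∈ S (seq n).1 := by
    intro n
    rw [hS, mem_setOf_eq]
    have h1 : (↑(ε * ‖w - (seq n).1‖) : EReal) ≤ (↑(ε * ‖w - v‖) : EReal) + (↑(ε * ‖v - (seq n).1‖) : EReal) := by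
      rw [← EReal.coe_add, EReal.coe_le_coe_iff, ← mul_add]
      have := norm_sub_le_norm_sub_add_norm_sub w v (seq n).1
      nlinarith [norm_nonneg (w - v), norm_nonneg (v - (seq n).1)]
    calc h w + ((ε * ‖w - (seq n).1‖ : ℝ) : EReal)
        ≤ h w + (((ε * ‖w - v‖ : ℝ) : EReal) + ((ε * ‖v - (seq n).1‖ : ℝ) : EReal)) :=
          add_le_add_right h1 _
      _ = (h w + ((ε * ‖w - v‖ : ℝ) : EReal)) + ((ε * ‖v - (seq n).1‖ : ℝ) : EReal) :=
          (add_assoc _ _ _).symm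
      _ ≤ h v + ((ε * ‖v - (seq n).1‖ : ℝ) : EReal) := add_le_add_left hcon.le _
      _ ≤ h (seq n).1 := hvS n
  set rw' : ℝ := (h w).toReal with hrw
  have hcoe_rw : ((rw' : ℝ) : EReal) = h w := EReal.coe_toReal hwtop (hbot _)
  have hstep2 : ∀ n, r (n + 1) ≤ rw' + ((n : ℝ) + 1)⁻¹ := by
    intro n
    have h1 := hbound n
    have h2 : (⨅ w' : S (seq n).1, h w') ≤ h w := iInf_le _ (⟨w, hwS n⟩ : S (seq n).1)
    have h3 : h (seq (n+1)).1 ≤ h w + ((((n : ℝ) + 1)⁻¹ : ℝ) : EReal) :=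
      le_trans h1 (add_le_add_left h2 _)
    rw [← hcoe_r (n+1), ← hcoe_rw, ← EReal.coe_add, EReal.coe_le_coe_iff] at h3
    exact h3
  have hLrw : L ≤ rw' := by
    have hl1 : Filter.Tendsto (fun n => r (n + 1)) Filter.atTop (nhds L) :=
      hrL.comp (Filter.tendsto_add_atTop_nat 1)
    have hl2 : Filter.Tendsto (fun n : ℕ => rw' + ((n : ℝ) + 1)⁻¹) Filter.atTop (nhds (rw' + 0)) := by
      apply Filter.Tendsto.const_add
      exact tendsto_one_div_add_atTop_nhds_zero_nat.congr (fun n => by rw [one_div])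
    rw [add_zero] at hl2
    exact le_of_tendsto_of_tendsto' hl1 hl2 hstep2
  have : h v < h v := by
    calc h v ≤ (L : EReal) := hvL
      _ ≤ (rw' : EReal) := by exact_mod_cast hLrw
      _ = h w := hcoe_rw
      _ ≤ h w + ((ε * ‖w - v‖ : ℝ) : EReal) := by
          calc h w = h w + 0 := (add_zero _).symm
          _ ≤ _ := add_le_add_right (by exact_mod_cast mul_nonneg hε.le (norm_nonneg _)) _
      _ < h v := hcon
  exact absurd this (lt_irrefl _)


lemma mySubgrad (h : E → EReal)
    (hconvepi : Convex ℝ {q : E × ℝ | h q.1 ≤ (q.2 : EReal)})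
    (hclosedepi : IsClosed {q : E × ℝ | h q.1 ≤ (q.2 : EReal)})
    (hbot : ∀ w, h w ≠ ⊥) (v : E) (hv : h v ≠ ⊤) {ε : ℝ} (hε : 0 < ε)
    (hek : ∀ w, h v ≤ h w + ((ε * ‖w - v‖ : ℝ) : EReal)) :
    ∃ z : E →L[ℝ] ℝ, ‖z‖ ≤ ε ∧ ∀ w, h v + ((z (w - v) : ℝ) : EReal) ≤ h w := by
  set T := {q : E × ℝ | h q.1 ≤ (q.2 : EReal)} with hT
  set hv' : ℝ := (h v).toReal with hhv'
  have hcoe_hv : ((hv' : ℝ) : EReal) = h v := EReal.coe_toReal hv (hbot v)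
  set O := {q : E × ℝ | q.2 < hv' - ε * ‖q.1 - v‖} with hO
  have hOopen : IsOpen O := by
    apply isOpen_lt continuous_snd
    exact continuous_const.sub (continuous_const.mul ((continuous_fst.sub continuous_const).norm))
  have hOconv : Convex ℝ O := by
    rintro ⟨x, s⟩ hx ⟨y, t⟩ hy a b ha hb hab
    simp only [hO, mem_setOf_eq] at hx hy ⊢
    have hnorm : ‖(a • x + b • y) - v‖ ≤ a * ‖x - v‖ + b * ‖y - v‖ := by
      have hrep : (a • x + b • y) - v = a • (x - v) + b • (y - v) := by
        have hv2 : v = a • v + b • v := by rw [← add_smul, hab, one_smul]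
        calc (a • x + b • y) - v = (a • x + b • y) - (a • v + b • v) := by rw [← hv2]
          _ = a • (x - v) + b • (y - v) := by rw [smul_sub, smul_sub]; abel
      rw [hrep]
      calc ‖a • (x - v) + b • (y - v)‖ ≤ ‖a • (x - v)‖ + ‖b • (y - v)‖ := norm_add_le _ _
        _ = a * ‖x - v‖ + b * ‖y - v‖ := by
            rw [norm_smul, norm_smul, Real.norm_eq_abs, Real.norm_eq_abs, abs_of_nonneg ha,
              abs_of_nonneg hb]
    have : a * s + b * t < a * (hv' - ε * ‖x - v‖) + b * (hv' - ε * ‖y - v‖) := by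
      rcases eq_or_lt_of_le ha with rfl | ha'
      · simp only [zero_mul, zero_add] at *
        have hb' : b = 1 := by linarith
        subst hb'
        simpa using hy
      · rcases eq_or_lt_of_le hb with rfl | hb'
        · simp only [zero_mul, add_zero] at *
          have ha'' : a = 1 := by linarith
          subst ha''
          simpa using hx
        · have := mul_lt_mul_of_pos_left hx ha'
          have := mul_lt_mul_of_pos_left hy hb'
          linarith
    calc (a * s + b * t : ℝ) < a * (hv' - ε * ‖x - v‖) + b * (hv' - ε * ‖y - v‖) := this
      _ = hv' * (a + b) - ε * (a * ‖x - v‖ + b * ‖y - v‖) := by ring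
      _ ≤ hv' - ε * ‖(a • x + b • y) - v‖ := by
          rw [hab]
          have := mul_le_mul_of_nonneg_left hnorm hε.le
          linarith
  have hdisj : Disjoint O T := by
    rw [Set.disjoint_left]
    rintro ⟨x, t⟩ hxO hxT
    simp only [hO, mem_setOf_eq] at hxO
    simp only [hT, mem_setOf_eq] at hxT
    have h1 : h x + ((ε * ‖x - v‖ : ℝ) : EReal) < (hv' : EReal) := by
      calc h x + ((ε * ‖x - v‖ : ℝ) : EReal) ≤ ((t : ℝ) : EReal) + ((ε * ‖x - v‖ : ℝ) : EReal) :=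
            add_le_add_left hxT _
        _ = ((t + ε * ‖x - v‖ : ℝ) : EReal) := by rw [EReal.coe_add]
        _ < ((hv' : ℝ) : EReal) := by
            rw [EReal.coe_lt_coe_iff]
            linarith
    rw [hcoe_hv] at h1
    exact absurd (hek x) h1.not_ge
  obtain ⟨φ, s, hφO, hφT⟩ := geometric_hahn_banach_open hOconv hOopen hconvepi hdisj
  set g : E →L[ℝ] ℝ := φ.comp (ContinuousLinearMap.inl ℝ E ℝ) with hg
  set κ : ℝ := φ ((0 : E), (1 : ℝ)) with hκ
  have hdecomp : ∀ x : E, ∀ t : ℝ, φ (x, t) = g x + t * κ := by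
    intro x t
    have : ((x, t) : E × ℝ) = (x, 0) + t • ((0 : E), (1 : ℝ)) := by
      simp [Prod.ext_iff]
    rw [this, map_add, map_smul]
    simp [hg, smul_eq_mul, hκ]
  have hmemO : ∀ (x : E) (t : ℝ), t < hv' - ε * ‖x - v‖ → (x, t) ∈ O := by
    intro x t ht; exact ht
  have hκpos : 0 < κ := by
    rcases lt_trichotomy κ 0 with hneg | hzero | hpos
    · exfalso
      set t : ℝ := min (hv' - ε * ‖(v : E) - v‖ - 1) ((s - g v) / κ) with hts
      have h1 : (v, t) ∈ O := by
        apply hmemO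
        calc t ≤ hv' - ε * ‖(v : E) - v‖ - 1 := min_le_left _ _
          _ < hv' - ε * ‖(v : E) - v‖ := by linarith
      have h2 := hφO _ h1
      rw [hdecomp] at h2
      have h3 : t ≤ (s - g v) / κ := min_le_right _ _
      rw [le_div_iff_of_neg hneg] at h3
      linarith
    · exfalso
      have hgs : ∀ w : E, g w < s := by
        intro w
        have h1 : (w, hv' - ε * ‖w - v‖ - 1) ∈ O := by
          apply hmemO; linarith
        have h2 := hφO _ h1
        rw [hdecomp, hzero, mul_zero, add_zero] at h2
        exact h2
      have hg0 : ∀ w : E, g w = 0 := by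
        have hle : ∀ w : E, g w ≤ 0 := by
          intro w
          by_contra hcon
          push_neg at hcon
          obtain ⟨n, hn⟩ := exists_nat_gt (s / g w)
          have h1 : g ((n : ℝ) • w) < s := hgs _
          rw [map_smul, smul_eq_mul] at h1
          have : s / g w * g w < (n : ℝ) * g w := by
            exact mul_lt_mul_of_pos_right hn hcon
          rw [div_mul_cancel₀ _ (ne_of_gt hcon)] at this
          linarith
        intro w
        have h1 := hle w
        have h2 := hle (-w)
        rw [map_neg] at h2
        linarith
      have h1 : (v, hv' - 1) ∈ O := by
        apply hmemO; simp
      have h2 := hφO _ h1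
      rw [hdecomp, hg0, hzero, mul_zero, add_zero] at h2
      have h3 : ((v, hv') : E × ℝ) ∈ T := by
        simp only [hT, mem_setOf_eq, hcoe_hv, le_refl]
      have h4 := hφT _ h3
      rw [hdecomp, hg0, hzero, mul_zero, add_zero] at h4
      linarith
    · exact hpos
  set z : E →L[ℝ] ℝ := (-κ⁻¹) • g with hz
  have hzval : ∀ w, z w = -(g w) / κ := by
    intro w; simp [hz, smul_eq_mul]; ring
  set α : E → ℝ := fun w => (s - g w) / κ with hα
  have hαz : ∀ w, α w = s / κ + z w := by
    intro w; rw [hα, hzval]; ring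
  have hi : ∀ w, ((α w : ℝ) : EReal) ≤ h w := by
    intro w
    rcases eq_or_ne (h w) ⊤ with htop | hne
    · rw [htop]; exact le_top
    · have hmem : ((w, (h w).toReal) : E × ℝ) ∈ T := by
        simp only [hT, mem_setOf_eq, EReal.coe_toReal hne (hbot w), le_refl]
      have h1 := hφT _ hmem
      rw [hdecomp] at h1
      have h2 : α w ≤ (h w).toReal := by
        rw [hα, div_le_iff₀ hκpos]
        linarith
      calc ((α w : ℝ) : EReal) ≤ (((h w).toReal : ℝ) : EReal) := by exact_mod_cast h2
        _ = h w := EReal.coe_toReal hne (hbot w)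
  have hii : ∀ w, hv' - ε * ‖w - v‖ ≤ α w := by
    intro w
    by_contra hcon
    push_neg at hcon
    set t : ℝ := (α w + (hv' - ε * ‖w - v‖)) / 2 with hts
    have h1 : (w, t) ∈ O := by apply hmemO; rw [hts]; linarith
    have h2 := hφO _ h1
    rw [hdecomp] at h2
    have h3 : t < α w := by
      rw [hα, lt_div_iff₀ hκpos]
      linarith
    rw [hts] at h3
    linarith
  have hαv : α v = hv' := by
    apply le_antisymm
    · have := hi v
      rw [← hcoe_hv, EReal.coe_le_coe_iff] at this
      exact this
    · have := hii v
      simp only [sub_self, norm_zero, mul_zero] at this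
      linarith
  refine ⟨z, ?_, ?_⟩
  · apply ContinuousLinearMap.opNorm_le_bound z hε.le
    intro d
    have hlow : ∀ d' : E, -(ε * ‖d'‖) ≤ z d' := by
      intro d'
      have h1 := hii (v + d')
      have h2 : α (v + d') = hv' + z d' := by
        have h5 := hαz (v + d')
        have h6 := hαz v
        have h7 : z (v + d') = z v + z d' := map_add _ _ _
        rw [h7] at h5
        rw [hαv] at h6
        linarith
      rw [h2] at h1
      have : ‖v + d' - v‖ = ‖d'‖ := by congr 1; abel
      rw [this] at h1
      linarith
    rw [Real.norm_eq_abs, abs_le]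
    constructor
    · have := hlow d; linarith
    · have := hlow (-d)
      rw [map_neg, norm_neg] at this
      linarith
  · intro w
    have h1 := hi w
    have h2 : hv' + z (w - v) = α w := by
      have h3 : z (w - v) = z w - z v := map_sub _ _ _
      have h4 := hαz w
      have h5 := hαz v
      rw [hαv] at h5
      rw [h3, h4]
      linarith
    calc h v + ((z (w - v) : ℝ) : EReal) = ((hv' : ℝ) : EReal) + ((z (w - v) : ℝ) : EReal) := by
          rw [hcoe_hv]
      _ = ((hv' + z (w - v) : ℝ) : EReal) := by rw [EReal.coe_add]
      _ = ((α w : ℝ) : EReal) := by rw [h2]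
      _ ≤ h w := h1

end
section
variable {X : Type*} [NormedAddCommGroup X] [NormedSpace ℝ X]

lemma myBaireBound [CompleteSpace X]
    (f : X → EReal) (hbot : ∀ x, f x ≠ ⊥) (hlsc : LowerSemicontinuous f)
    (hint : (interior {x : X | f x < ⊤}).Nonempty) :
    ∃ (z : X) (s M : ℝ), 0 < s ∧ ∀ u ∈ Metric.ball z s, f u ≤ ((M : ℝ) : EReal) := by
  obtain ⟨z₀, hz₀⟩ := hint
  rw [mem_interior_iff_mem_nhds, Metric.mem_nhds_iff] at hz₀
  obtain ⟨ε, hε, hball⟩ := hz₀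
  set r : ℝ := ε / 2 with hrdef
  have hr : 0 < r := by positivity
  have hK : Metric.closedBall z₀ r ⊆ {x : X | f x < ⊤} :=
    (Metric.closedBall_subset_ball (by rw [hrdef]; linarith)).trans hball
  set K : Set X := Metric.closedBall z₀ r with hKdef
  have hKclosed : IsClosed K := Metric.isClosed_closedBall
  haveI : CompleteSpace K := hKclosed.completeSpace_coe
  haveI : Nonempty K := ⟨⟨z₀, Metric.mem_closedBall_self hr.le⟩⟩
  set F : ℕ → Set K := fun n => {p : K | f p.1 ≤ ((n : ℝ) : EReal)} with hF
  have hFclosed : ∀ n, IsClosed (F n) := by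
    intro n
    have h1 : IsClosed {x : X | f x ≤ ((n : ℝ) : EReal)} := hlsc.isClosed_preimage _
    exact h1.preimage continuous_subtype_val
  have hFcover : ⋃ n, F n = univ := by
    ext p
    simp only [mem_iUnion, mem_univ, iff_true, hF, mem_setOf_eq]
    have hp : f p.1 < ⊤ := hK p.2
    obtain ⟨n, hn⟩ := exists_nat_ge ((f p.1).toReal)
    refine ⟨n, ?_⟩
    rw [← EReal.coe_toReal hp.ne (hbot p.1)]
    exact_mod_cast hn
  obtain ⟨n, ⟨⟨y, hyK⟩, hyint⟩⟩ := nonempty_interior_of_iUnion_of_closed hFclosed hFcover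
  obtain ⟨V, hVopen, hVeq⟩ := isOpen_induced_iff.mp (isOpen_interior (s := F n))
  have hyV : y ∈ V := by
    have : (⟨y, hyK⟩ : K) ∈ Subtype.val ⁻¹' V := by rw [hVeq]; exact hyint
    exact this
  have hVK : ∀ x, x ∈ V → x ∈ K → f x ≤ ((n : ℝ) : EReal) := by
    intro x hxV hxK
    have : (⟨x, hxK⟩ : K) ∈ Subtype.val ⁻¹' V := hxV
    rw [hVeq] at this
    have h2 : (⟨x, hxK⟩ : K) ∈ F n := interior_subset this
    exact h2
  obtain ⟨ρ₀, hρ₀, hρball⟩ := Metric.isOpen_iff.mp hVopen y hyV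
  set ρ : ℝ := min ρ₀ (2 * r) with hρdef
  have hρpos : 0 < ρ := lt_min hρ₀ (by linarith)
  have hρle : ρ ≤ 2 * r := min_le_right _ _
  set δ : ℝ := ρ / (2 * r) with hδdef
  have hδpos : 0 < δ := by positivity
  have hδle : δ ≤ 1 := by
    rw [hδdef, div_le_one (by linarith)]
    exact hρle
  set y' : X := z₀ + (1 - δ) • (y - z₀) with hy'def
  set s : ℝ := δ * r / 2 with hsdef
  have hspos : 0 < s := by positivity
  refine ⟨y', s, n, hspos, ?_⟩
  intro u hu
  rw [Metric.mem_ball, dist_eq_norm] at hu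
  have hyz : ‖y - z₀‖ ≤ r := by
    have := hyK
    rw [hKdef, Metric.mem_closedBall, dist_eq_norm] at this
    exact this
  have hy'y : ‖y' - y‖ = δ * ‖y - z₀‖ := by
    have : y' - y = (-δ) • (y - z₀) := by
      rw [hy'def]
      rw [sub_smul, one_smul, neg_smul]
      abel
    rw [this, norm_smul, Real.norm_eq_abs, abs_neg, abs_of_pos hδpos]
  have hy'z : ‖y' - z₀‖ = (1 - δ) * ‖y - z₀‖ := by
    have : y' - z₀ = (1 - δ) • (y - z₀) := by rw [hy'def]; abel
    rw [this, norm_smul, Real.norm_eq_abs, abs_of_nonneg (by linarith)]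
  have huy : ‖u - y‖ < ρ := by
    calc ‖u - y‖ ≤ ‖u - y'‖ + ‖y' - y‖ := norm_sub_le_norm_sub_add_norm_sub u y' y
      _ < s + δ * ‖y - z₀‖ := by
          apply add_lt_add_of_lt_of_le hu
          rw [hy'y]
      _ ≤ δ * r / 2 + δ * r := by
          have := mul_le_mul_of_nonneg_left hyz hδpos.le
          rw [hsdef]
          linarith
      _ = (3 / 4) * ρ := by
          rw [hδdef]
          field_simp
          ring
      _ < ρ := by linarith
  have huz : ‖u - z₀‖ < r := by
    calc ‖u - z₀‖ ≤ ‖u - y'‖ + ‖y' - z₀‖ := norm_sub_le_norm_sub_add_norm_sub u y' z₀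
      _ < s + (1 - δ) * ‖y - z₀‖ := by
          apply add_lt_add_of_lt_of_le hu
          rw [hy'z]
      _ ≤ δ * r / 2 + (1 - δ) * r := by
          have := mul_le_mul_of_nonneg_left hyz (by linarith : (0:ℝ) ≤ 1 - δ)
          rw [hsdef]
          linarith
      _ ≤ r := by nlinarith
    
  apply hVK
  · apply hρball
    rw [Metric.mem_ball, dist_eq_norm]
    exact lt_of_lt_of_le huy (min_le_left _ _)
  · rw [hKdef, Metric.mem_closedBall, dist_eq_norm]
    exact huz.le

lemma myMinorant (f : X → EReal) (hbot : ∀ x, f x ≠ ⊥)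
    (hlsc : LowerSemicontinuous f)
    (hconv : ∀ x y : X, ∀ a b : ℝ, 0 ≤ a → 0 ≤ b → a + b = 1 →
      f (a • x + b • y) ≤ (a : EReal) * f x + (b : EReal) * f y)
    (x₁ : X) (hx₁ : f x₁ ≠ ⊤) :
    ∃ (p : X →L[ℝ] ℝ) (c : ℝ), ∀ x, ((p x - c : ℝ) : EReal) ≤ f x := by
  set T : Set (X × ℝ) := {q : X × ℝ | f q.1 ≤ ((q.2 : ℝ) : EReal)} with hT
  have hTclosed : IsClosed T := by
    have h1 : IsClosed {p : X × EReal | f p.1 ≤ p.2} :=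
      lowerSemicontinuous_iff_isClosed_epigraph.mp hlsc
    have h2 : T = (fun q : X × ℝ => (q.1, (q.2 : EReal))) ⁻¹' {p : X × EReal | f p.1 ≤ p.2} := rfl
    rw [h2]
    exact h1.preimage (continuous_fst.prodMk (continuous_coe_real_ereal.comp continuous_snd))
  have hTconv : Convex ℝ T := by
    rintro ⟨x, sx⟩ hx ⟨y, sy⟩ hy a b ha hb hab
    simp only [hT, mem_setOf_eq] at hx hy ⊢
    calc f (a • x + b • y) ≤ (a : EReal) * f x + (b : EReal) * f y := hconv x y a b ha hb hab
      _ ≤ (a : EReal) * ((sx : ℝ) : EReal) + (b : EReal) * ((sy : ℝ) : EReal) := by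
          apply add_le_add
          · exact mul_le_mul_of_nonneg_left hx (by exact_mod_cast ha)
          · exact mul_le_mul_of_nonneg_left hy (by exact_mod_cast hb)
      _ = ((a * sx + b * sy : ℝ) : EReal) := by
          rw [EReal.coe_add, EReal.coe_mul, EReal.coe_mul]
  set t₁ : ℝ := (f x₁).toReal - 1 with ht₁
  have hcoe₁ : (((f x₁).toReal : ℝ) : EReal) = f x₁ := EReal.coe_toReal hx₁ (hbot x₁)
  have hnotmem : ((x₁, t₁) : X × ℝ) ∉ T := by
    simp only [hT, mem_setOf_eq, not_le]
    rw [← hcoe₁, EReal.coe_lt_coe_iff, ht₁]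
    linarith
  obtain ⟨φ, u, hφx, hφT⟩ := geometric_hahn_banach_point_closed hTconv hTclosed hnotmem
  set g : X →L[ℝ] ℝ := φ.comp (ContinuousLinearMap.inl ℝ X ℝ) with hg
  set κ : ℝ := φ ((0 : X), (1 : ℝ)) with hκ
  have hdecomp : ∀ x : X, ∀ t : ℝ, φ (x, t) = g x + t * κ := by
    intro x t
    have : ((x, t) : X × ℝ) = (x, 0) + t • ((0 : X), (1 : ℝ)) := by simp [Prod.ext_iff]
    rw [this, map_add, map_smul]
    simp [hg, smul_eq_mul, hκ]
  have hmemT : ∀ m : ℝ, (f x₁).toReal ≤ m → ((x₁, m) : X × ℝ) ∈ T := by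
    intro m hm
    simp only [hT, mem_setOf_eq]
    rw [← hcoe₁]
    exact_mod_cast hm
  have hκpos : 0 < κ := by
    rcases lt_trichotomy κ 0 with hneg | hzero | hpos
    · exfalso
      set m : ℝ := max ((f x₁).toReal) ((u - g x₁) / κ) with hm
      have h1 := hφT _ (hmemT m (le_max_left _ _))
      rw [hdecomp] at h1
      have h2 : (u - g x₁) / κ ≤ m := le_max_right _ _
      have h3 : m * κ ≤ u - g x₁ := by
        rw [div_le_iff_of_neg hneg] at h2
        linarith
      linarith
    · exfalso
      have h1 := hφT _ (hmemT ((f x₁).toReal) le_rfl)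
      rw [hdecomp, hzero, mul_zero, add_zero] at h1
      rw [hdecomp, hzero, mul_zero, add_zero] at hφx
      linarith
    · exact hpos
  refine ⟨(-κ⁻¹) • g, -(u / κ), ?_⟩
  intro x
  rcases eq_or_ne (f x) ⊤ with htop | hne
  · rw [htop]; exact le_top
  · have hmem : ((x, (f x).toReal) : X × ℝ) ∈ T := by
      simp only [hT, mem_setOf_eq, EReal.coe_toReal hne (hbot x), le_refl]
    have h1 := hφT _ hmem
    rw [hdecomp] at h1
    have h2 : ((-κ⁻¹) • g) x - -(u / κ) ≤ (f x).toReal := by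
      have h4 : (u - g x) / κ ≤ (f x).toReal := by
        rw [div_le_iff₀ hκpos]; linarith
      have h5 : ((-κ⁻¹) • g) x - -(u / κ) = (u - g x) / κ := by
        simp only [ContinuousLinearMap.smul_apply, smul_eq_mul]
        field_simp
        ring
      rw [h5]; exact h4
    calc ((((-κ⁻¹) • g) x - -(u / κ) : ℝ) : EReal) ≤ (((f x).toReal : ℝ) : EReal) := by
          exact_mod_cast h2
      _ = f x := EReal.coe_toReal hne (hbot x)

lemma myCoercive (ys : StrongDual ℝ X) (lam : StrongDual ℝ (StrongDual ℝ X)) {s : ℝ} (hs : 0 < s)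
    (hlam : ‖lam‖ ≤ s) {c M : ℝ} (hc : c + M < 0) :
    ∃ w : X, ‖w‖ < s ∧ lam ys + c + M ≤ ys w := by
  have hlamys : lam ys ≤ s * ‖ys‖ := by
    calc lam ys ≤ |lam ys| := le_abs_self _
      _ = ‖lam ys‖ := (Real.norm_eq_abs _).symm
      _ ≤ ‖lam‖ * ‖ys‖ := lam.le_opNorm ys
      _ ≤ s * ‖ys‖ := mul_le_mul_of_nonneg_right hlam (norm_nonneg _)
  set r : ℝ := ‖ys‖ + (c + M) / s with hr
  have hsr : s * r = s * ‖ys‖ + (c + M) := by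
    rw [hr, mul_add, mul_div_cancel₀ _ (ne_of_gt hs)]
  rcases lt_or_ge r 0 with hrneg | hrpos
  · refine ⟨0, by simpa using hs, ?_⟩
    rw [map_zero]
    nlinarith
  · have hrlt : r < ‖ys‖ := by
      rw [hr]
      have : (c + M) / s < 0 := div_neg_of_neg_of_pos hc hs
      linarith
    obtain ⟨x, hx1, hx2⟩ := ContinuousLinearMap.exists_lt_apply_of_lt_opNorm ys hrlt
    rcases le_or_gt 0 (ys x) with hsign | hsign
    · refine ⟨s • x, ?_, ?_⟩
      · rw [norm_smul, Real.norm_eq_abs, abs_of_pos hs]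
        nlinarith
      · rw [map_smul, smul_eq_mul]
        rw [Real.norm_eq_abs, abs_of_nonneg hsign] at hx2
        nlinarith
    · refine ⟨(-s) • x, ?_, ?_⟩
      · rw [norm_smul, Real.norm_eq_abs, abs_neg, abs_of_pos hs]
        nlinarith
      · rw [map_smul, smul_eq_mul]
        rw [Real.norm_eq_abs, abs_of_neg hsign] at hx2
        nlinarith

end
end MyAux

set_option maxHeartbeats 1000000

theorem stmt13 [CompleteSpace X] (f : X → EReal)
    (hbot : ∀ x, f x ≠ ⊥) (hproper : ∃ x, f x ≠ ⊤)
    (hlsc : LowerSemicontinuous f)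
    (hconv : ∀ x y : X, ∀ a b : ℝ, 0 ≤ a → 0 ≤ b → a + b = 1 →
      f (a • x + b • y) ≤ (a : EReal) * f x + (b : EReal) * f y)
    (hint : (interior {x : X | f x < ⊤}).Nonempty)
    (hultra : IsUltraMaxMonotone
      {p : X × StrongDual ℝ X | ∀ y : X, f p.1 + ((p.2 (y - p.1) : ℝ) : EReal) ≤ f y}) :
    Function.Surjective (inclusionInDoubleDual ℝ X) := by
  classical
  obtain ⟨x₂, hx₂⟩ := hproper
  set A := {p : X × StrongDual ℝ X | ∀ y : X, f p.1 + ((p.2 (y - p.1) : ℝ) : EReal) ≤ f y} with hA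
  have hAfin : ∀ p ∈ A, f p.1 ≠ ⊤ := by
    intro p hp htop
    have h1 := hp x₂
    rw [htop, EReal.top_add_coe] at h1
    exact hx₂ (top_le_iff.mp h1)
  obtain ⟨z₀, s, M, hs, hMball⟩ := myBaireBound f hbot hlsc hint
  have hz₀ball : f z₀ ≤ ((M : ℝ) : EReal) := hMball z₀ (Metric.mem_ball_self hs)
  have hz₀fin : f z₀ ≠ ⊤ := ne_top_of_le_ne_top (EReal.coe_ne_top M) hz₀ball
  obtain ⟨p₀, c₀, hmin⟩ := myMinorant f hbot hlsc hconv z₀ hz₀fin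
  set J := inclusionInDoubleDual ℝ X with hJ
  have hkey : ∀ xss : StrongDual ℝ (StrongDual ℝ X), ‖xss - J z₀‖ ≤ s → ∃ x : X, J x = xss := by
    intro xss hxss
    set term : X → StrongDual ℝ X → EReal := fun x ys => ((ys x - xss ys : ℝ) : EReal) - f x with hterm
    set h : StrongDual ℝ X → EReal := fun ys => ⨆ x : X, term x ys with hh
    have hterm_top : ∀ x ys, f x = ⊤ → term x ys = ⊥ := by
      intro x ys hx
      show ((ys x - xss ys : ℝ) : EReal) - f x = ⊥
      rw [hx, EReal.sub_top]
    have hterm_fin : ∀ x ys, f x ≠ ⊤ →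
        term x ys = ((ys x - xss ys - (f x).toReal : ℝ) : EReal) := by
      intro x ys hx
      show ((ys x - xss ys : ℝ) : EReal) - f x = ((ys x - xss ys - (f x).toReal : ℝ) : EReal)
      conv_lhs => rw [← EReal.coe_toReal hx (hbot x)]
      rw [← EReal.coe_sub]
    have hbots : ∀ ys, h ys ≠ ⊥ := by
      intro ys hbotys
      have h1 : term z₀ ys ≤ h ys := le_iSup (fun x => term x ys) z₀
      rw [hbotys, le_bot_iff, hterm_fin z₀ ys hz₀fin] at h1
      exact EReal.coe_ne_bot _ h1
    have hlsch : LowerSemicontinuous h := by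
      apply lowerSemicontinuous_iSup
      intro x
      rcases eq_or_ne (f x) ⊤ with hx | hx
      · have heq : term x = fun _ => (⊥ : EReal) := by
          funext ys; exact hterm_top x ys hx
        rw [heq]
        exact lowerSemicontinuous_const
      · have heq : term x =
            fun ys : StrongDual ℝ X => ((ys x - xss ys - (f x).toReal : ℝ) : EReal) := by
          funext ys; exact hterm_fin x ys hx
        rw [heq]
        apply Continuous.lowerSemicontinuous
        apply continuous_coe_real_ereal.comp
        exact (((ContinuousLinearMap.apply ℝ ℝ x).continuous).sub xss.continuous).sub
          continuous_const
    have hC : ∀ ys, ((-M : ℝ) : EReal) ≤ h ys := by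
      intro ys
      by_contra hcon
      push_neg at hcon
      obtain ⟨cc, hc1, hc2⟩ := exists_between hcon
      have hccbot : cc ≠ ⊥ := by
        intro hbb
        rw [hbb] at hc1
        exact (hbots ys) (le_bot_iff.mp hc1.le)
      have hcctop : cc ≠ ⊤ := ne_top_of_le_ne_top (EReal.coe_ne_top _) hc2.le
      set c : ℝ := cc.toReal with hcdef
      have hcoecc : ((c : ℝ) : EReal) = cc := EReal.coe_toReal hcctop hccbot
      have hcM : c + M < 0 := by
        have : ((c : ℝ) : EReal) < ((-M : ℝ) : EReal) := by rw [hcoecc]; exact hc2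
        rw [EReal.coe_lt_coe_iff] at this
        linarith
      have hlamnorm : ‖xss - J z₀‖ ≤ s := hxss
      obtain ⟨w, hw1, hw2⟩ := myCoercive ys (xss - J z₀) hs hlamnorm hcM
      have hfw : f (z₀ + w) ≤ ((M : ℝ) : EReal) := by
        apply hMball
        rw [Metric.mem_ball, dist_eq_norm, add_sub_cancel_left]
        exact hw1
      have h2 : ((c : ℝ) : EReal) ≤ term (z₀ + w) ys := by
        have h3 : ((ys (z₀ + w) - xss ys - M : ℝ) : EReal) ≤ term (z₀ + w) ys := by
          show _ ≤ ((ys (z₀ + w) - xss ys : ℝ) : EReal) - f (z₀ + w)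
          calc ((ys (z₀ + w) - xss ys - M : ℝ) : EReal)
              = ((ys (z₀ + w) - xss ys : ℝ) : EReal) - ((M : ℝ) : EReal) := by
                rw [← EReal.coe_sub]
            _ ≤ ((ys (z₀ + w) - xss ys : ℝ) : EReal) - f (z₀ + w) :=
                EReal.sub_le_sub (le_refl _) hfw
        refine le_trans ?_ h3
        rw [EReal.coe_le_coe_iff]
        have hlamval : (xss - J z₀) ys = xss ys - ys z₀ := by
          rw [ContinuousLinearMap.sub_apply, hJ, NormedSpace.dual_def]
        rw [hlamval] at hw2
        have hadd : ys (z₀ + w) = ys z₀ + ys w := map_add _ _ _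
        linarith
      have h4 : ((c : ℝ) : EReal) ≤ h ys := le_trans h2 (le_iSup (fun x => term x ys) (z₀ + w))
      rw [hcoecc] at h4
      exact absurd h4 hc1.not_ge
    have hfinh : h p₀ ≠ ⊤ := by
      have h1 : h p₀ ≤ ((c₀ - xss p₀ : ℝ) : EReal) := by
        apply iSup_le
        intro x
        rcases eq_or_ne (f x) ⊤ with hx | hx
        · rw [hterm_top x p₀ hx]; exact bot_le
        · rw [hterm_fin x p₀ hx, EReal.coe_le_coe_iff]
          have h2 := hmin x
          rw [← EReal.coe_toReal hx (hbot x), EReal.coe_le_coe_iff] at h2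
          linarith
      exact ne_top_of_le_ne_top (EReal.coe_ne_top _) h1
    have hepi : {q : StrongDual ℝ X × ℝ | h q.1 ≤ ((q.2 : ℝ) : EReal)} =
        ⋂ x : X, {q : StrongDual ℝ X × ℝ | term x q.1 ≤ ((q.2 : ℝ) : EReal)} := by
      ext q
      simp only [mem_setOf_eq, mem_iInter, hh]
      exact iSup_le_iff
    have hsets : ∀ x : X, Convex ℝ {q : StrongDual ℝ X × ℝ | term x q.1 ≤ ((q.2 : ℝ) : EReal)} ∧
        IsClosed {q : StrongDual ℝ X × ℝ | term x q.1 ≤ ((q.2 : ℝ) : EReal)} := by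
      intro x
      rcases eq_or_ne (f x) ⊤ with hx | hx
      · have heq : {q : StrongDual ℝ X × ℝ | term x q.1 ≤ ((q.2 : ℝ) : EReal)} = univ := by
          ext q
          simp [hterm_top x _ hx]
        rw [heq]
        exact ⟨convex_univ, isClosed_univ⟩
      · have heq : {q : StrongDual ℝ X × ℝ | term x q.1 ≤ ((q.2 : ℝ) : EReal)} =
            {q : StrongDual ℝ X × ℝ | q.1 x - xss q.1 - q.2 ≤ (f x).toReal} := by
          ext q
          rw [mem_setOf_eq, mem_setOf_eq, hterm_fin x _ hx, EReal.coe_le_coe_iff]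
          constructor <;> intro h' <;> linarith
        rw [heq]
        constructor
        · have hlin : IsLinearMap ℝ (fun q : StrongDual ℝ X × ℝ => q.1 x - xss q.1 - q.2) := by
            constructor
            · intro a b
              simp only [Prod.fst_add, Prod.snd_add, ContinuousLinearMap.add_apply, map_add]
              ring
            · intro cc a
              simp only [Prod.smul_fst, Prod.smul_snd, ContinuousLinearMap.coe_smul',
                Pi.smul_apply, map_smul, smul_eq_mul]
              ring
          exact convex_halfSpace_le hlin _
        · apply isClosed_le
          · exact ((((ContinuousLinearMap.apply ℝ ℝ x).continuous).comp continuous_fst).sub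
              (xss.continuous.comp continuous_fst)).sub continuous_snd
          · exact continuous_const
    have hEpiConv : Convex ℝ {q : StrongDual ℝ X × ℝ | h q.1 ≤ ((q.2 : ℝ) : EReal)} := by
      rw [hepi]; exact convex_iInter fun x => (hsets x).1
    have hEpiClosed : IsClosed {q : StrongDual ℝ X × ℝ | h q.1 ≤ ((q.2 : ℝ) : EReal)} := by
      rw [hepi]; exact isClosed_iInter fun x => (hsets x).2
    have happrox : ∀ ε : ℝ, 0 < ε → ∃ x : X, ‖xss - J x‖ ≤ ε := by
      intro ε hε
      obtain ⟨v, hvtop, hek⟩ := myEkeland h hlsch (-M) hC p₀ hfinh hε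
      obtain ⟨z, hznorm, hsub⟩ := mySubgrad h hEpiConv hEpiClosed hbots v hvtop hε hek
      have hprem : ∀ p ∈ A, (0:ℝ) ≤ ((xss + z) - inclusionInDoubleDual ℝ X p.1) (v - p.2) := by
        intro p hp
        have hp' : ∀ y : X, f p.1 + ((p.2 (y - p.1) : ℝ) : EReal) ≤ f y := hp
        have hfa_top : f p.1 ≠ ⊤ := hAfin p hp
        set fa' : ℝ := (f p.1).toReal with hfa'
        have hcoefa : ((fa' : ℝ) : EReal) = f p.1 := EReal.coe_toReal hfa_top (hbot _)
        have hFen : ∀ x : X, term x p.2 ≤ ((p.2 p.1 - xss p.2 - fa' : ℝ) : EReal) := by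
          intro x
          rcases eq_or_ne (f x) ⊤ with hx | hx
          · rw [hterm_top _ _ hx]; exact bot_le
          · rw [hterm_fin _ _ hx, EReal.coe_le_coe_iff]
            have h1 := hp' x
            rw [← hcoefa, ← EReal.coe_toReal hx (hbot x), ← EReal.coe_add,
              EReal.coe_le_coe_iff] at h1
            have h2 : p.2 (x - p.1) = p.2 x - p.2 p.1 := map_sub _ _ _
            linarith
        have hhaseq : h p.2 = ((p.2 p.1 - xss p.2 - fa' : ℝ) : EReal) := by
          apply le_antisymm (iSup_le hFen)
          rw [← hterm_fin p.1 p.2 hfa_top]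
          exact le_iSup (fun x => term x p.2) p.1
        set hv' : ℝ := (h v).toReal with hhv'
        have hcoehv : ((hv' : ℝ) : EReal) = h v := EReal.coe_toReal hvtop (hbots v)
        have hI := hsub p.2
        rw [hhaseq, ← hcoehv, ← EReal.coe_add, EReal.coe_le_coe_iff] at hI
        have hII : v p.1 - xss v - fa' ≤ hv' := by
          have h1 : term p.1 v ≤ h v := le_iSup (fun x => term x v) p.1
          rw [hterm_fin p.1 v hfa_top, ← hcoehv, EReal.coe_le_coe_iff] at h1
          exact h1
        have hz1 : z (p.2 - v) = z p.2 - z v := map_sub _ _ _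
        have hgoal : ((xss + z) - inclusionInDoubleDual ℝ X p.1) (v - p.2)
            = (xss v - xss p.2) + (z v - z p.2) - (v p.1 - p.2 p.1) := by
          rw [ContinuousLinearMap.sub_apply, ContinuousLinearMap.add_apply,
            NormedSpace.dual_def, map_sub, map_sub, ContinuousLinearMap.sub_apply]
          try ring
        rw [hgoal]
        linarith
      obtain ⟨x, hx, -⟩ := hultra.2 (xss + z) v hprem
      refine ⟨x, ?_⟩
      have hxz : xss - J x = -z := by
        rw [hJ, ← hx]
        try abel
      rw [hxz]
      exact (norm_neg z).le.trans hznorm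
    have hnorm_map : ∀ x : X, ‖J x‖ = ‖x‖ := fun x =>
      (inclusionInDoubleDualLi ℝ (E := X)).norm_map x
    choose seqx hseqx using fun n : ℕ => happrox (((n : ℝ) + 1)⁻¹) (by positivity)
    have hcs : CauchySeq seqx := by
      apply cauchySeq_of_le_tendsto_0 (fun N : ℕ => 2 * ((N : ℝ) + 1)⁻¹)
      · intro n m N hn hm
        rw [dist_eq_norm]
        have h1 : ‖seqx n - seqx m‖ = ‖J (seqx n) - J (seqx m)‖ := by
          rw [← map_sub, hnorm_map]
        rw [h1]
        have h2 : ‖J (seqx n) - J (seqx m)‖ ≤ ‖J (seqx n) - xss‖ + ‖xss - J (seqx m)‖ :=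
          norm_sub_le_norm_sub_add_norm_sub (J (seqx n)) xss (J (seqx m))
        have h3 : ‖J (seqx n) - xss‖ = ‖xss - J (seqx n)‖ := norm_sub_rev (J (seqx n)) xss
        have h4 := hseqx n
        have h5 := hseqx m
        have h6 : ((n : ℝ) + 1)⁻¹ ≤ ((N : ℝ) + 1)⁻¹ := by
          apply inv_anti₀ (by positivity)
          have : (N : ℝ) ≤ (n : ℝ) := by exact_mod_cast hn
          linarith
        have h7 : ((m : ℝ) + 1)⁻¹ ≤ ((N : ℝ) + 1)⁻¹ := by
          apply inv_anti₀ (by positivity)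
          have : (N : ℝ) ≤ (m : ℝ) := by exact_mod_cast hm
          linarith
        linarith
      · have hten : Filter.Tendsto (fun N : ℕ => ((N : ℝ) + 1)⁻¹) Filter.atTop (nhds 0) :=
          tendsto_one_div_add_atTop_nhds_zero_nat.congr (fun n => by rw [one_div])
        have := hten.const_mul 2
        simpa using this
    obtain ⟨x, hxlim⟩ := cauchySeq_tendsto_of_complete hcs
    refine ⟨x, ?_⟩
    have hJcont : Filter.Tendsto (fun n => J (seqx n)) Filter.atTop (nhds (J x)) :=
      (J.continuous.tendsto x).comp hxlim
    have hJlim : Filter.Tendsto (fun n => J (seqx n)) Filter.atTop (nhds xss) := by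
      refine (tendsto_iff_norm_sub_tendsto_zero (f := fun n => J (seqx n)) (b := xss)).mpr ?_
      apply squeeze_zero (fun n => norm_nonneg (J (seqx n) - xss)) (fun n => ?_)
      · exact tendsto_one_div_add_atTop_nhds_zero_nat.congr (fun n => by rw [one_div])
      · rw [norm_sub_rev (J (seqx n)) xss]
        exact hseqx n
    exact tendsto_nhds_unique hJcont hJlim
  intro wss
  set d : ℝ := ‖wss - J z₀‖ with hd
  set t : ℝ := s / (d + 1) with ht
  have hd0 : 0 ≤ d := norm_nonneg (wss - J z₀)
  have ht0 : 0 < t := by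
    rw [ht]
    positivity
  have hxssball : ‖(J z₀ + t • (wss - J z₀)) - J z₀‖ ≤ s := by
    have : NormSMulClass ℝ (StrongDual ℝ (StrongDual ℝ X)) :=
      @NormedSpace.toNormSMulClass ℝ (StrongDual ℝ (StrongDual ℝ X)) _ _ _
    rw [add_sub_cancel_left, norm_smul, Real.norm_eq_abs, abs_of_pos ht0, ht, ← hd,
      div_mul_eq_mul_div, div_le_iff₀ (by linarith : (0:ℝ) < d + 1)]
    nlinarith
  obtain ⟨x, hx⟩ := hkey _ hxssball
  refine ⟨z₀ + t⁻¹ • (x - z₀), ?_⟩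
  rw [map_add, map_smul, map_sub, hx]
  rw [add_sub_cancel_left, smul_smul, inv_mul_cancel₀ (ne_of_gt ht0), one_smul]
  abel
end

section
/- Let X be a real Banach space and let A : X → X* be a continuous linear monotone operator that is ultramaximally monotone. Define A† : X → X* by (A† x)(y) = (A y)(x) and set S := (A − A†)/2. Then S is ultramaximally monotone. -/
open Pointwise Set NormedSpace

variable {X : Type*} [NormedAddCommGroup X] [NormedSpace ℝ X]

/-- If `2·t·g ≤ e + t²·p` for all real `t`, with `p, e ≥ 0`, then `g² ≤ e·p`. -/
lemma quad_aux (g p e : ℝ) (hp : 0 ≤ p) (he : 0 ≤ e)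
    (h : ∀ t : ℝ, 2 * t * g ≤ e + t ^ 2 * p) : g ^ 2 ≤ e * p := by
  rcases eq_or_lt_of_le hp with hp0 | hp0
  · -- p = 0 : show g = 0
    have hg : g = 0 := by
      by_contra hg
      have h1 := h ((e + 1) / g)
      rw [← hp0] at h1
      field_simp at h1
      rw [mul_div_cancel_right₀ _ hg, mul_zero, add_zero,
        mul_div_cancel_right₀ _ (pow_ne_zero 2 hg)] at h1
      nlinarith
    rw [hg]; nlinarith
  · have h1 := h (g / p)
    have h2 : 2 * (g / p) * g - (g / p) ^ 2 * p = g ^ 2 / p := by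
      field_simp; ring
    have h3 : g ^ 2 / p ≤ e := by nlinarith [h1, h2]
    calc g ^ 2 = g ^ 2 / p * p := by field_simp
    _ ≤ e * p := by nlinarith

/-- Positivity of a symmetric positive bilinear form, canonically extended to the bidual. -/
lemma bidual_pos (P : X →L[ℝ] StrongDual ℝ X) (hsym : ∀ a b, P a b = P b a)
    (hpos : ∀ a, 0 ≤ P a a) (w : StrongDual ℝ (StrongDual ℝ X)) :
    0 ≤ w (w.comp P) := by
  -- Cauchy-Schwarz for the form
  have hCS : ∀ a b : X, (P a b) ^ 2 ≤ P a a * P b b := by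
    intro a b
    have key : ∀ t : ℝ, 2 * t * (-(P a b)) ≤ P a a + t ^ 2 * P b b := by
      intro t
      have h0 := hpos (a + t • b)
      have hexp : P (a + t • b) (a + t • b)
          = P a a + 2 * t * P a b + t ^ 2 * P b b := by
        simp only [map_add, map_smul, ContinuousLinearMap.add_apply,
          ContinuousLinearMap.smul_apply, smul_eq_mul]
        rw [hsym b a]; ring
      nlinarith [h0, hexp]
    have := quad_aux (-(P a b)) (P b b) (P a a) (hpos b) (hpos a) key
    nlinarith
  -- norm bound : ‖P a‖ ≤ √‖P‖ · √(P a a)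
  have hPnn : (0:ℝ) ≤ ‖P‖ := ContinuousLinearMap.opNorm_nonneg P
  have hsqrtP : ∀ b : X, Real.sqrt (P b b) ≤ Real.sqrt ‖P‖ * ‖b‖ := by
    intro b
    have h1 : P b b ≤ ‖P‖ * ‖b‖ ^ 2 := by
      have := (P b).le_opNorm b
      have h2 := P.le_opNorm b
      have h3 : P b b ≤ ‖P b‖ * ‖b‖ := le_trans (le_abs_self _) (by
        exact (P b).le_opNorm b)
      nlinarith [norm_nonneg b, norm_nonneg (P b)]
    calc Real.sqrt (P b b) ≤ Real.sqrt (‖P‖ * ‖b‖ ^ 2) := Real.sqrt_le_sqrt h1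
    _ = Real.sqrt ‖P‖ * ‖b‖ := by
        rw [Real.sqrt_mul hPnn, Real.sqrt_sq (norm_nonneg b)]
  have habsP : ∀ a b : X, |P a b| ≤ Real.sqrt (P a a) * Real.sqrt (P b b) := by
    intro a b
    have h1 : |P a b| = Real.sqrt ((P a b) ^ 2) := (Real.sqrt_sq_eq_abs _).symm
    rw [h1, ← Real.sqrt_mul (hpos a)]
    exact Real.sqrt_le_sqrt (hCS a b)
  -- the function to maximize
  set f : X → ℝ := fun a => 2 * w (P a) - P a a with hf
  have hb : ∀ a, f a ≤ (‖w‖ * Real.sqrt ‖P‖) ^ 2 := by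
    intro a
    have h1 : w (P a) ≤ ‖w‖ * ‖P a‖ :=
      le_trans (le_abs_self _) (w.le_opNorm (P a))
    have h2 : ‖P a‖ ≤ Real.sqrt (P a a) * Real.sqrt ‖P‖ := by
      apply ContinuousLinearMap.opNorm_le_bound _
        (mul_nonneg (Real.sqrt_nonneg _) (Real.sqrt_nonneg _))
      intro b
      calc ‖P a b‖ = |P a b| := rfl
      _ ≤ Real.sqrt (P a a) * Real.sqrt (P b b) := habsP a b
      _ ≤ Real.sqrt (P a a) * (Real.sqrt ‖P‖ * ‖b‖) := by
          exact mul_le_mul_of_nonneg_left (hsqrtP b) (Real.sqrt_nonneg _)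
      _ = Real.sqrt (P a a) * Real.sqrt ‖P‖ * ‖b‖ := by ring
    have h3 : P a a = Real.sqrt (P a a) ^ 2 := (Real.sq_sqrt (hpos a)).symm
    have h4 : ‖w‖ * ‖P a‖ ≤ ‖w‖ * (Real.sqrt (P a a) * Real.sqrt ‖P‖) :=
      mul_le_mul_of_nonneg_left h2 (norm_nonneg w)
    simp only [hf]
    nlinarith [Real.sqrt_nonneg (P a a), norm_nonneg w, Real.sqrt_nonneg ‖P‖,
      sq_nonneg (‖w‖ * Real.sqrt ‖P‖ - Real.sqrt (P a a))]
  have hbdd : BddAbove (Set.range f) := ⟨(‖w‖ * Real.sqrt ‖P‖) ^ 2, by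
    rintro x ⟨a, rfl⟩; exact hb a⟩
  have hne : (Set.range f).Nonempty := ⟨f 0, 0, rfl⟩
  set r : ℝ := sSup (Set.range f) with hr
  -- r ≥ 0
  have hr0 : 0 ≤ r := by
    have : f 0 ≤ r := le_csSup hbdd ⟨0, rfl⟩
    simpa [hf] using this
  -- main estimate for each ε
  have main : ∀ ε : ℝ, 0 < ε →
      -(ε ^ 2 / 4) - ‖w‖ * Real.sqrt ‖P‖ * ε ≤ w (w.comp P) := by
    intro ε hε
    obtain ⟨y, ⟨a, rfl⟩, hfa⟩ := exists_lt_of_lt_csSup hne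
      (show r - ε ^ 2 < r by nlinarith)
    -- for all b t : 2 t (w(Pb) - Pab) ≤ ε² + t² P b b
    have hg : ∀ b : X, |w (P b) - P a b| ≤ ε * Real.sqrt (P b b) := by
      intro b
      have hkey : ∀ t : ℝ, 2 * t * (w (P b) - P a b) ≤ ε ^ 2 + t ^ 2 * P b b := by
        intro t
        have h1 : f (a + t • b) ≤ r := le_csSup hbdd ⟨a + t • b, rfl⟩
        have hexp : f (a + t • b)
            = f a + 2 * t * (w (P b) - P a b) - t ^ 2 * P b b := by
          simp only [hf, map_add, map_smul, ContinuousLinearMap.add_apply,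
            ContinuousLinearMap.smul_apply, smul_eq_mul]
          rw [hsym b a]; ring
        nlinarith [h1, hexp, hfa]
      have := quad_aux (w (P b) - P a b) (P b b) (ε ^ 2) (hpos b)
        (by positivity) hkey
      have h2 : |w (P b) - P a b| = Real.sqrt ((w (P b) - P a b) ^ 2) :=
        (Real.sqrt_sq_eq_abs _).symm
      rw [h2]
      calc Real.sqrt ((w (P b) - P a b) ^ 2) ≤ Real.sqrt (ε ^ 2 * P b b) :=
        Real.sqrt_le_sqrt this
      _ = ε * Real.sqrt (P b b) := by
          rw [Real.sqrt_mul (by positivity), Real.sqrt_sq hε.le]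
    -- ‖w∘P - P a‖ ≤ ε √‖P‖
    have hnrm : ‖w.comp P - P a‖ ≤ ε * Real.sqrt ‖P‖ := by
      apply ContinuousLinearMap.opNorm_le_bound _
        (mul_nonneg hε.le (Real.sqrt_nonneg _))
      intro b
      have : (w.comp P - P a) b = w (P b) - P a b := rfl
      rw [this]
      calc ‖w (P b) - P a b‖ = |w (P b) - P a b| := rfl
      _ ≤ ε * Real.sqrt (P b b) := hg b
      _ ≤ ε * (Real.sqrt ‖P‖ * ‖b‖) :=
          mul_le_mul_of_nonneg_left (hsqrtP b) hε.le
      _ = ε * Real.sqrt ‖P‖ * ‖b‖ := by ring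
    -- w (P a) ≥ -(ε²/4)
    have hwa : -(ε ^ 2 / 4) ≤ w (P a) := by
      have h1 := hg a
      have h2 : P a a = Real.sqrt (P a a) ^ 2 := (Real.sq_sqrt (hpos a)).symm
      have h3 := abs_le.mp h1
      nlinarith [sq_nonneg (Real.sqrt (P a a) - ε / 2), h3.1, h3.2]
    -- w (w∘P) ≥ w (P a) - ‖w‖ ε √‖P‖
    have hfinal : w (P a) - ‖w‖ * (ε * Real.sqrt ‖P‖) ≤ w (w.comp P) := by
      have h1 : w (w.comp P) - w (P a) = w (w.comp P - P a) := by
        rw [map_sub]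
      have h2 : |w (w.comp P - P a)| ≤ ‖w‖ * ‖w.comp P - P a‖ :=
        w.le_opNorm _
      have h3 : -(‖w‖ * (ε * Real.sqrt ‖P‖)) ≤ w (w.comp P - P a) := by
        have h4 := (abs_le.mp h2).1
        have h5 : ‖w‖ * ‖w.comp P - P a‖ ≤ ‖w‖ * (ε * Real.sqrt ‖P‖) :=
          mul_le_mul_of_nonneg_left hnrm (norm_nonneg w)
        linarith
      linarith [h1, h3]
    nlinarith [hwa, hfinal, norm_nonneg w, Real.sqrt_nonneg ‖P‖]
  -- conclude by letting ε → 0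
  by_contra hcon
  push_neg at hcon
  set C := ‖w‖ * Real.sqrt ‖P‖ with hC
  have hC0 : 0 ≤ C := mul_nonneg (norm_nonneg w) (Real.sqrt_nonneg _)
  set ε := min 1 (-(w (w.comp P)) / (C + 1)) with hε
  have hε0 : 0 < ε := by
    apply lt_min one_pos
    apply div_pos (by linarith) (by linarith)
  have h1 := main ε hε0
  have h2 : ε ≤ 1 := min_le_left _ _
  have h3 : ε ≤ -(w (w.comp P)) / (C + 1) := min_le_right _ _
  have h4 : ε * (C + 1) ≤ -(w (w.comp P)) := (le_div_iff₀ (by linarith)).mp h3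
  nlinarith [h1, h2, h4, hε0.le, hC0, mul_le_mul_of_nonneg_right h2 hε0.le]

theorem stmt14 [CompleteSpace X] (A : X →L[ℝ] StrongDual ℝ X)
    (hmono : ∀ x y : X, 0 ≤ (A x - A y) (x - y))
    (hultra : IsUltraMaxMonotone {p : X × StrongDual ℝ X | p.2 = A p.1}) :
    IsUltraMaxMonotone
      {p : X × StrongDual ℝ X | p.2 = ((2 : ℝ)⁻¹ • (A - ContinuousLinearMap.flip A)) p.1} := by
  set S : X →L[ℝ] StrongDual ℝ X := (2 : ℝ)⁻¹ • (A - ContinuousLinearMap.flip A) with hSdef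
  set P : X →L[ℝ] StrongDual ℝ X := (2 : ℝ)⁻¹ • (A + ContinuousLinearMap.flip A) with hPdef
  have hSapp : ∀ a b : X, S a b = 2⁻¹ * (A a b - A b a) := by
    intro a b
    simp [hSdef, ContinuousLinearMap.smul_apply, ContinuousLinearMap.sub_apply,
      ContinuousLinearMap.flip_apply, mul_sub]
  have hPapp : ∀ a b : X, P a b = 2⁻¹ * (A a b + A b a) := by
    intro a b
    simp [hPdef, ContinuousLinearMap.smul_apply, ContinuousLinearMap.add_apply,
      ContinuousLinearMap.flip_apply, mul_add]
  have hPS : ∀ a b : X, P a b + S a b = A a b := by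
    intro a b; rw [hPapp, hSapp]; ring
  have hSaa : ∀ a : X, S a a = 0 := by intro a; rw [hSapp]; ring
  have hPsym : ∀ a b : X, P a b = P b a := by
    intro a b; rw [hPapp, hPapp]; ring
  have hPpos : ∀ a : X, 0 ≤ P a a := by
    intro a
    have h := hmono a 0
    simp only [map_zero, sub_zero, ContinuousLinearMap.zero_apply,
      ContinuousLinearMap.sub_apply] at h
    rw [hPapp]; linarith
  constructor
  · -- monotonicity of S
    rintro p hp q hq
    simp only [Set.mem_setOf_eq] at hp hq
    rw [hp, hq]
    have hSskew : ∀ a b : X, S a b + S b a = 0 := by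
      intro a b; rw [hSapp, hSapp]; ring
    simp only [ContinuousLinearMap.sub_apply, map_sub]
    linarith [hSaa p.1, hSaa q.1, hSskew p.1 q.1]
  · intro xss xs hrel
    have hrel' : ∀ x : X, 0 ≤ (xss - inclusionInDoubleDual ℝ X x) (xs - S x) :=
      fun x => hrel (x, S x) rfl
    have hexp : ∀ (t : ℝ) (a : X),
        (xss - inclusionInDoubleDual ℝ X (t • a)) (xs - S (t • a))
          = xss xs - t * (xss (S a) + xs a) := by
      intro t a
      simp only [map_sub, map_smul, ContinuousLinearMap.sub_apply,
        ContinuousLinearMap.smul_apply, smul_eq_mul, dual_def]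
      rw [hSaa]
      ring
    have hkey1 : ∀ a : X, xss (S a) + xs a = 0 := by
      intro a
      by_contra hne
      have h1 := hrel' (((xss xs + 1) / (xss (S a) + xs a)) • a)
      rw [hexp] at h1
      rw [div_mul_cancel₀ _ hne] at h1
      linarith
    have hc : 0 ≤ xss xs := by
      have h1 := hrel' 0
      simpa using h1
    set Pst : StrongDual ℝ X := xss.comp P with hPst
    have hPstA : ∀ b : X, Pst b = xss (P b) := fun b => rfl
    have hpos2 : ∀ a : X, 0 ≤ xss Pst - 2 * Pst a + P a a := by
      intro a
      have h := bidual_pos P hPsym hPpos (xss - inclusionInDoubleDual ℝ X a)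
      have hcomp : (xss - inclusionInDoubleDual ℝ X a).comp P = Pst - P a := by
        ext b
        simp only [ContinuousLinearMap.comp_apply, ContinuousLinearMap.sub_apply,
          dual_def]
        rw [hPstA, hPsym a b]
      rw [hcomp] at h
      have hval : (xss - inclusionInDoubleDual ℝ X a) (Pst - P a)
          = xss Pst - 2 * Pst a + P a a := by
        simp only [map_sub, ContinuousLinearMap.sub_apply, dual_def]
        rw [hPstA]
        ring
      linarith [hval ▸ h]
    have hyp : ∀ p ∈ {p : X × StrongDual ℝ X | p.2 = A p.1},
        0 ≤ (xss - inclusionInDoubleDual ℝ X p.1) ((xs + Pst) - p.2) := by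
      rintro p hp
      simp only [Set.mem_setOf_eq] at hp
      rw [hp]
      set a := p.1 with ha
      have hval : (xss - inclusionInDoubleDual ℝ X a) (xs + Pst - A a)
          = xss xs + (xss Pst - 2 * Pst a + P a a) := by
        simp only [map_sub, map_add, ContinuousLinearMap.sub_apply,
          ContinuousLinearMap.add_apply, dual_def]
        have h1 : xss (A a) = xss (P a) + xss (S a) := by
          have hA : A a = P a + S a := by
            ext b
            simp only [ContinuousLinearMap.add_apply]
            exact (hPS a b).symm
          rw [hA, map_add]
        have h2 : xss (S a) = -(xs a) := by
          have := hkey1 a; linarith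
        have h3 : A a a = P a a := by
          have h4 := hPS a a
          have h5 := hSaa a
          linarith
        rw [h1, h2, h3, ← hPstA]
        ring
      rw [hval]
      linarith [hc, hpos2 a]
    obtain ⟨x, hx1, hx2⟩ := hultra.2 xss (xs + Pst) hyp
    -- conclusion
    · have hxA : xs + Pst = A x := hx2
      have hPstx : Pst = P x := by
        ext b
        rw [hPstA, hx1, dual_def, hPsym]
      refine ⟨x, hx1, ?_⟩
      show xs = S x
      ext b
      have h1 : xs b + P x b = A x b := by
        rw [← hPstx]
        have h6 := congrArg (fun (f : StrongDual ℝ X) => f b) hxA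
        simpa using h6
      have h2 := hPS x b
      linarith
end

section
/- Let X be a real Banach space and let A : X → X* be a continuous linear ultramaximally monotone operator. Suppose there exists δ > 0 such that ⟨A x, x⟩ ≥ δ‖x‖² for all x ∈ X. Then X is reflexive. -/
open Pointwise Set NormedSpace

variable {X : Type*} [NormedAddCommGroup X] [NormedSpace ℝ X]

/-- Type synonym of `X` on which we will install the Hilbert norm induced by the
symmetric part of `A`. -/
def HilbSyn {X : Type*} [NormedAddCommGroup X] [NormedSpace ℝ X]
    (_A : X →L[ℝ] StrongDual ℝ X) : Type _ := X

instance {X : Type*} [NormedAddCommGroup X] [NormedSpace ℝ X] (A : X →L[ℝ] StrongDual ℝ X) :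
    AddCommGroup (HilbSyn A) := inferInstanceAs (AddCommGroup X)

instance {X : Type*} [NormedAddCommGroup X] [NormedSpace ℝ X] (A : X →L[ℝ] StrongDual ℝ X) :
    Module ℝ (HilbSyn A) := inferInstanceAs (Module ℝ X)

/-- The identity, as a linear equivalence `HilbSyn A ≃ₗ[ℝ] X`. -/
def hilbSynEquiv {X : Type*} [NormedAddCommGroup X] [NormedSpace ℝ X]
    (A : X →L[ℝ] StrongDual ℝ X) : HilbSyn A ≃ₗ[ℝ] X := LinearEquiv.refl ℝ X

lemma sq_le_imp_le_sqrt_mul {a b c : ℝ} (ha : 0 ≤ a) (hb : 0 ≤ b) (hc : 0 ≤ c)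
    (h : a ^ 2 ≤ c * b ^ 2) : a ≤ Real.sqrt c * b := by
  have h2 := Real.sqrt_le_sqrt h
  rwa [Real.sqrt_sq ha, Real.sqrt_mul hc, Real.sqrt_sq hb] at h2

theorem stmt17 [CompleteSpace X] (A : X →L[ℝ] StrongDual ℝ X)
    (hmono : ∀ x y : X, 0 ≤ (A x - A y) (x - y))
    (hultra : IsUltraMaxMonotone {p : X × StrongDual ℝ X | p.2 = A p.1})
    (δ : ℝ) (hδ : 0 < δ) (hcoer : ∀ x : X, δ * ‖x‖ ^ 2 ≤ A x x) :
    Function.Surjective (inclusionInDoubleDual ℝ X) := by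
  classical
  intro phi
  set l : HilbSyn A ≃ₗ[ℝ] X := hilbSynEquiv A with hl
  have hApos : ∀ x : X, 0 ≤ A x x := fun x =>
    le_trans (by positivity) (hcoer x)
  let core : InnerProductSpace.Core ℝ (HilbSyn A) :=
  { inner := fun x y => (A (l x) (l y) + A (l y) (l x)) / 2
    conj_inner_symm := by
      intro x y
      simp only [starRingEnd_apply, star_trivial]
      ring
    re_inner_nonneg := by
      intro x
      simp only [RCLike.re_to_real]
      have := hApos (l x)
      linarith
    definite := by
      intro x hx
      change (A (l x) (l x) + A (l x) (l x)) / 2 = 0 at hx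
      have h1 : A (l x) (l x) = 0 := by linarith
      have h2 := hcoer (l x)
      rw [h1] at h2
      have h3 : δ * ‖l x‖ ^ 2 = 0 := le_antisymm h2 (by positivity)
      have h4' : ‖l x‖ ^ 2 = 0 := by
        rcases mul_eq_zero.mp h3 with h | h
        · exact absurd h hδ.ne'
        · exact h
      have h4 : l x = 0 := norm_eq_zero.mp (pow_eq_zero_iff two_ne_zero |>.mp h4')
      have := l.map_eq_zero_iff.mp h4
      exact this
    add_left := by
      intro x y z
      simp only [map_add, ContinuousLinearMap.add_apply]
      ring
    smul_left := by
      intro x y r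
      simp only [map_smul, ContinuousLinearMap.coe_smul', Pi.smul_apply, smul_eq_mul,
        ContinuousLinearMap.map_smul, starRingEnd_apply, star_trivial]
      ring }
  letI nacg : NormedAddCommGroup (HilbSyn A) := core.toNormedAddCommGroup
  letI ips : InnerProductSpace ℝ (HilbSyn A) := InnerProductSpace.ofCore core.toCore
  -- the new norm squared
  have hsq : ∀ y : HilbSyn A, ‖y‖ ^ 2 = A (l y) (l y) := by
    intro y
    have h1 : (inner ℝ y y : ℝ) = A (l y) (l y) := by
      show (A (l y) (l y) + A (l y) (l y)) / 2 = A (l y) (l y)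
      ring
    rw [← real_inner_self_eq_norm_sq, h1]
  -- bounds
  have hub : ∀ y : HilbSyn A, ‖l y‖ ≤ Real.sqrt δ⁻¹ * ‖y‖ := by
    intro y
    refine sq_le_imp_le_sqrt_mul (norm_nonneg _) (norm_nonneg _) (by positivity) ?_
    have h1 := hcoer (l y)
    rw [← hsq y] at h1
    have h2 : δ⁻¹ * (δ * ‖l y‖ ^ 2) ≤ δ⁻¹ * ‖y‖ ^ 2 :=
      mul_le_mul_of_nonneg_left h1 (by positivity)
    rwa [← mul_assoc, inv_mul_cancel₀ hδ.ne', one_mul] at h2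
  have hlb : ∀ x : X, ‖l.symm x‖ ≤ Real.sqrt ‖A‖ * ‖x‖ := by
    intro x
    refine sq_le_imp_le_sqrt_mul (norm_nonneg _) (norm_nonneg _) (norm_nonneg A) ?_
    have h1 : ‖l.symm x‖ ^ 2 = A x x := by
      have := hsq (l.symm x)
      rwa [l.apply_symm_apply] at this
    rw [h1]
    calc A x x ≤ ‖A x‖ * ‖x‖ := le_trans (Real.le_norm_self _) ((A x).le_opNorm x)
      _ ≤ (‖A‖ * ‖x‖) * ‖x‖ := by
          have := A.le_opNorm x
          have h0 : (0:ℝ) ≤ ‖x‖ := norm_nonneg x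
          nlinarith
      _ = ‖A‖ * ‖x‖ ^ 2 := by ring
  let e : HilbSyn A ≃L[ℝ] X :=
    l.toContinuousLinearEquivOfBounds (Real.sqrt δ⁻¹) (Real.sqrt ‖A‖) hub hlb
  haveI : CompleteSpace (HilbSyn A) := by
    refine IsUniformInducing.completeSpace e.isUniformEmbedding.toIsUniformInducing ?_
    rw [e.surjective.range_eq]
    exact completeSpace_iff_isComplete_univ.mp ‹CompleteSpace X›
  -- Riesz representation on the Hilbert space `HilbSyn A`
  set J := InnerProductSpace.toDual ℝ (HilbSyn A) with hJ
  -- the functional `ψ` on the dual of `HilbSyn A`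
  let es : X →L[ℝ] HilbSyn A := (e.symm : X →L[ℝ] HilbSyn A)
  let prec : StrongDual ℝ (HilbSyn A) →L[ℝ] StrongDual ℝ X :=
    (ContinuousLinearMap.compL ℝ X (HilbSyn A) ℝ).flip es
  let psi : StrongDual ℝ (StrongDual ℝ (HilbSyn A)) := phi.comp prec
  -- the element of `StrongDual ℝ (HilbSyn A)` given by `y ↦ psi (J y)`
  let Flin : HilbSyn A →ₗ[ℝ] ℝ :=
  { toFun := fun y => psi (J y)
    map_add' := by
      intro a b
      show psi (J (a + b)) = psi (J a) + psi (J b)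
      rw [map_add, map_add]
    map_smul' := by
      intro c a
      show psi (J (c • a)) = c • psi (J a)
      rw [map_smulₛₗ]
      simp [starRingEnd_apply] }
  letI i1 : NormedAddCommGroup (StrongDual ℝ (HilbSyn A)) := inferInstance
  letI i2 : NormedSpace ℝ (StrongDual ℝ (HilbSyn A)) := inferInstance
  let F : StrongDual ℝ (HilbSyn A) := Flin.mkContinuous ‖psi‖ (by
    intro y
    have h1 : ‖Flin y‖ = ‖psi (J y)‖ := rfl
    rw [h1]
    calc ‖psi (J y)‖ ≤ ‖psi‖ * ‖J y‖ := psi.le_opNorm _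
      _ = ‖psi‖ * ‖y‖ := by rw [J.norm_map])
  obtain ⟨x, hx⟩ := J.surjective F
  have key : ∀ g : StrongDual ℝ (HilbSyn A), g x = psi g := by
    intro g
    obtain ⟨y, hy⟩ := J.surjective g
    have h1 : g x = (inner ℝ y x : ℝ) := by
      rw [← hy]; exact InnerProductSpace.toDual_apply_apply
    have h2 : F y = (inner ℝ x y : ℝ) := by
      rw [← hx]; exact InnerProductSpace.toDual_apply_apply
    have h3 : F y = psi (J y) := rfl
    rw [h1, real_inner_comm, ← h2, h3, hy]
  refine ⟨e x, ?_⟩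
  ext f
  have h4 : prec (f.comp (e : HilbSyn A →L[ℝ] X)) = f := by
    ext z
    show f (e (e.symm z)) = f z
    rw [e.apply_symm_apply]
  have h5 : phi f = psi (f.comp (e : HilbSyn A →L[ℝ] X)) := by
    show phi f = phi (prec (f.comp (e : HilbSyn A →L[ℝ] X)))
    rw [h4]
  have h6 : psi (f.comp (e : HilbSyn A →L[ℝ] X)) = f (e x) :=
    (key (f.comp (e : HilbSyn A →L[ℝ] X))).symm
  rw [NormedSpace.dual_def, h5, h6]
end

section
/- Let X be a real Banach space and let A : X → X* be a continuous linear monotone operator with ran A = X*. Suppose there exists δ > 0 such that ⟨A x, x⟩ ≥ δ‖x‖² for all x ∈ X. Then X is reflexive. -/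
open Pointwise Set NormedSpace

variable {X : Type*} [NormedAddCommGroup X] [NormedSpace ℝ X]

/-- Type synonym carrying the Hilbert structure. -/
def HSp (X : Type*) : Type _ := X

def toH {X : Type*} : X → HSp X := fun x => x
def fromH {X : Type*} : HSp X → X := fun x => x

lemma hilbert_surj {Y : Type*} [NormedAddCommGroup Y] [InnerProductSpace ℝ Y]
    [CompleteSpace Y] : Function.Surjective (inclusionInDoubleDual ℝ Y) := by
  intro H
  set T := InnerProductSpace.toDual ℝ Y with hT
  have hlin : ∀ (r : ℝ) (a : Y), T (r • a) = r • T a := by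
    intro r a; simp
  let h : StrongDual ℝ Y := LinearMap.mkContinuous
    { toFun := fun a => H (T a)
      map_add' := by intro a b; rw [map_add, map_add]
      map_smul' := by intro r a; rw [hlin, map_smul]; rfl }
    ‖H‖ (fun a => by
      calc ‖H (T a)‖ ≤ ‖H‖ * ‖T a‖ := H.le_opNorm _
      _ = ‖H‖ * ‖a‖ := by rw [T.norm_map])
  refine ⟨T.symm h, ?_⟩
  ext g
  show g (T.symm h) = H g
  have h1 : g (T.symm h) = inner ℝ (T.symm g) (T.symm h) :=
    (InnerProductSpace.toDual_symm_apply).symm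
  have h2 : (inner ℝ (T.symm h) (T.symm g) : ℝ) = h (T.symm g) :=
    InnerProductSpace.toDual_symm_apply
  rw [h1, real_inner_comm, h2]
  show H (T (T.symm g)) = H g
  rw [T.apply_symm_apply]

lemma surj_of_equiv {Y Z : Type*} [NormedAddCommGroup Y] [NormedSpace ℝ Y]
    [NormedAddCommGroup Z] [NormedSpace ℝ Z] (e : Y ≃L[ℝ] Z)
    (h : Function.Surjective (inclusionInDoubleDual ℝ Z)) :
    Function.Surjective (inclusionInDoubleDual ℝ Y) := by
  intro F
  let d : StrongDual ℝ Z ≃L[ℝ] StrongDual ℝ Y := e.symm.arrowCongr (ContinuousLinearEquiv.refl ℝ ℝ)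
  let G : StrongDual ℝ (StrongDual ℝ Z) := F.comp (d : StrongDual ℝ Z →L[ℝ] StrongDual ℝ Y)
  obtain ⟨z, hz⟩ := h G
  refine ⟨e.symm z, ?_⟩
  ext f
  show f (e.symm z) = F f
  calc f (e.symm z) = (d.symm f) z := rfl
    _ = inclusionInDoubleDual ℝ Z z (d.symm f) := rfl
    _ = G (d.symm f) := by rw [hz]
    _ = F (d (d.symm f)) := rfl
    _ = F f := by rw [d.apply_symm_apply]

theorem stmt18 [CompleteSpace X] (A : X →L[ℝ] StrongDual ℝ X)
    (hmono : ∀ x y : X, 0 ≤ (A x - A y) (x - y))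
    (hran : Set.range (fun x : X => A x) = Set.univ)
    (δ : ℝ) (hδ : 0 < δ) (hcoer : ∀ x : X, δ * ‖x‖ ^ 2 ≤ A x x) :
    Function.Surjective (inclusionInDoubleDual ℝ X) := by
  letI : AddCommGroup (HSp X) := inferInstanceAs (AddCommGroup X)
  letI : Module ℝ (HSp X) := inferInstanceAs (Module ℝ X)
  have hub : ∀ x : X, A x x ≤ ‖A‖ * ‖x‖ ^ 2 := by
    intro x
    calc A x x ≤ |A x x| := le_abs_self _
      _ = ‖A x x‖ := rfl
      _ ≤ ‖A x‖ * ‖x‖ := (A x).le_opNorm x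
      _ ≤ (‖A‖ * ‖x‖) * ‖x‖ :=
          mul_le_mul_of_nonneg_right (A.le_opNorm x) (norm_nonneg x)
      _ = ‖A‖ * ‖x‖ ^ 2 := by ring
  let core : InnerProductSpace.Core ℝ (HSp X) :=
  { inner := fun x y => A (fromH x) (fromH y) + A (fromH y) (fromH x)
    conj_inner_symm := fun x y => by
      simp only [starRingEnd_apply, star_trivial]
      show A (fromH y) (fromH x) + A (fromH x) (fromH y)
          = A (fromH x) (fromH y) + A (fromH y) (fromH x)
      ring
    re_inner_nonneg := fun x => by
      have h1 := hcoer (fromH x)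
      have h2 : (0:ℝ) ≤ δ * ‖fromH x‖ ^ 2 := by positivity
      show (0:ℝ) ≤ A (fromH x) (fromH x) + A (fromH x) (fromH x)
      linarith
    add_left := fun x y z => by
      show A (fromH x + fromH y) (fromH z) + A (fromH z) (fromH x + fromH y)
          = (A (fromH x) (fromH z) + A (fromH z) (fromH x))
            + (A (fromH y) (fromH z) + A (fromH z) (fromH y))
      simp only [map_add, ContinuousLinearMap.add_apply]
      ring
    smul_left := fun x y r => by
      show A (r • fromH x) (fromH y) + A (fromH y) (r • fromH x)
          = (starRingEnd ℝ) r * (A (fromH x) (fromH y) + A (fromH y) (fromH x))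
      simp only [map_smul, ContinuousLinearMap.smul_apply, smul_eq_mul,
        starRingEnd_apply, star_trivial]
      ring
    definite := fun x hx => by
      have h0 : A (fromH x) (fromH x) + A (fromH x) (fromH x) = 0 := hx
      have h1 := hcoer (fromH x)
      have h2 : ‖fromH x‖ = 0 := by
        rcases eq_or_lt_of_le (norm_nonneg (fromH x)) with h | h
        · exact h.symm
        · exfalso; nlinarith [mul_pos hδ (pow_pos h 2)]
      show fromH x = 0
      exact norm_eq_zero.mp h2 }
  letI : NormedAddCommGroup (HSp X) := core.toNormedAddCommGroup
  letI : InnerProductSpace ℝ (HSp X) := InnerProductSpace.ofCore core.toCore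
  have hn : ∀ x : X, ‖toH x‖ ^ 2 = A x x + A x x := by
    intro x
    rw [← real_inner_self_eq_norm_sq]
    rfl
  let le : X ≃ₗ[ℝ] HSp X :=
    { toFun := toH, invFun := fromH, map_add' := fun _ _ => rfl,
      map_smul' := fun _ _ => rfl, left_inv := fun _ => rfl, right_inv := fun _ => rfl }
  have hto : ∀ x : X, ‖le x‖ ≤ Real.sqrt (2 * ‖A‖) * ‖x‖ := by
    intro x
    have h0 : (0:ℝ) ≤ 2 * ‖A‖ := by positivity
    have h1 : ‖toH x‖ ^ 2 ≤ (Real.sqrt (2 * ‖A‖) * ‖x‖) ^ 2 := by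
      have hs : (Real.sqrt (2 * ‖A‖) * ‖x‖) ^ 2 = 2 * ‖A‖ * ‖x‖ ^ 2 := by
        rw [mul_pow, Real.sq_sqrt h0]
      rw [hs, hn x]
      nlinarith [hub x]
    have h2 := Real.sqrt_le_sqrt h1
    rw [Real.sqrt_sq (norm_nonneg _), Real.sqrt_sq (by positivity)] at h2
    exact h2
  have hinv : ∀ y : HSp X, ‖le.symm y‖ ≤ Real.sqrt ((2 * δ)⁻¹) * ‖y‖ := by
    intro y
    have h0 : (0:ℝ) ≤ (2 * δ)⁻¹ := by positivity
    have hny : ‖y‖ ^ 2 = A (fromH y) (fromH y) + A (fromH y) (fromH y) := hn (fromH y)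
    have h1 : ‖fromH y‖ ^ 2 ≤ (Real.sqrt ((2 * δ)⁻¹) * ‖y‖) ^ 2 := by
      have hs : (Real.sqrt ((2 * δ)⁻¹) * ‖y‖) ^ 2 = (2 * δ)⁻¹ * ‖y‖ ^ 2 := by
        rw [mul_pow, Real.sq_sqrt h0]
      have hc := hcoer (fromH y)
      rw [hs, hny]
      have key : (2 * δ) * ‖fromH y‖ ^ 2
          ≤ A (fromH y) (fromH y) + A (fromH y) (fromH y) := by linarith
      calc ‖fromH y‖ ^ 2 = (2 * δ)⁻¹ * ((2 * δ) * ‖fromH y‖ ^ 2) := by field_simp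
        _ ≤ (2 * δ)⁻¹ * (A (fromH y) (fromH y) + A (fromH y) (fromH y)) :=
            mul_le_mul_of_nonneg_left key h0
    have h2 := Real.sqrt_le_sqrt h1
    rw [Real.sqrt_sq (norm_nonneg _), Real.sqrt_sq (by positivity)] at h2
    exact h2
  let e : X ≃L[ℝ] HSp X :=
    le.toContinuousLinearEquivOfBounds _ _ hto hinv
  haveI : CompleteSpace (HSp X) := by
    let ue : X ≃ᵤ HSp X :=
      { toEquiv := e.toLinearEquiv.toEquiv
        uniformContinuous_toFun := (e : X →L[ℝ] HSp X).uniformContinuous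
        uniformContinuous_invFun := (e.symm : HSp X →L[ℝ] X).uniformContinuous }
    exact ue.completeSpace_iff.mp ‹CompleteSpace X›
  exact surj_of_equiv e hilbert_surj
end

section
/- Let X be a real Banach space and let A : X → X* be a continuous linear monotone operator such that ⟨A x, x⟩ ≥ δ‖x‖² for all x ∈ X, where δ > 0. Define A† : X → X* by (A† x)(y) = (A y)(x), set P := (A + A†)/2, and let P* : X** → X* be the Banach-space adjoint of the continuous linear operator P : X → X* (so that ⟨P* x**, x⟩ = ⟨P x, x**⟩ for all x ∈ X, x** ∈ X**). Then ⟨P* x**, x**⟩ ≥ δ‖x**‖² for every x** ∈ X**, where ⟨P* x**, x**⟩ denotes x**(P* x**). -/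
open Pointwise Set NormedSpace

variable {X : Type*} [NormedAddCommGroup X] [NormedSpace ℝ X]

def HilbRenorm (X : Type*) : Type _ := X

instance : AddCommGroup (HilbRenorm X) := inferInstanceAs (AddCommGroup X)
instance : Module ℝ (HilbRenorm X) := inferInstanceAs (Module ℝ X)

noncomputable def coreOf (P : X →L[ℝ] StrongDual ℝ X) (hsym : ∀ x y : X, P x y = P y x)
    (δ : ℝ) (hδ : 0 < δ) (hcoer : ∀ x : X, δ * ‖x‖ ^ 2 ≤ P x x) :
    InnerProductSpace.Core ℝ (HilbRenorm X) where
  inner x y := P x y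
  conj_inner_symm x y := by simpa [starRingEnd_apply] using hsym y x
  re_inner_nonneg x := by
    have h := hcoer x
    have : (0:ℝ) ≤ P x x := le_trans (by positivity) h
    simpa using this
  add_left x y z := by
    change P (@id X x + @id X y) (@id X z) = P (@id X x) (@id X z) + P (@id X y) (@id X z)
    rw [map_add, ContinuousLinearMap.add_apply]
  smul_left x y r := by
    change P (r • @id X x) (@id X y) = (starRingEnd ℝ) r * P (@id X x) (@id X y)
    rw [map_smul]
    simp [starRingEnd_apply]
  definite x hx := by
    have h0 : P x x = 0 := hx
    have h1 : δ * ‖show X from x‖ ^ 2 ≤ δ * 0 := by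
      rw [mul_zero, ← h0]; exact hcoer _
    have h2 : ‖show X from x‖ ^ 2 ≤ 0 := le_of_mul_le_mul_left h1 hδ
    have h3 : ‖show X from x‖ ^ 2 = 0 := le_antisymm h2 (sq_nonneg _)
    have h4 : ‖show X from x‖ = 0 := pow_eq_zero_iff two_ne_zero |>.mp h3
    exact norm_eq_zero.mp h4

theorem exists_rep [CompleteSpace X] (P : X →L[ℝ] StrongDual ℝ X) (hsym : ∀ x y : X, P x y = P y x)
    (δ : ℝ) (hδ : 0 < δ) (hcoer : ∀ x : X, δ * ‖x‖ ^ 2 ≤ P x x)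
    (xss : StrongDual ℝ (StrongDual ℝ X)) : ∃ w : X, ∀ f : StrongDual ℝ X, xss f = f w := by
  have hPbound : ∀ x : X, P x x ≤ ‖P‖ * ‖x‖ ^ 2 := by
    intro x
    have h1 : ‖P x x‖ ≤ ‖P x‖ * ‖x‖ := (P x).le_opNorm x
    have h2 : ‖P x‖ ≤ ‖P‖ * ‖x‖ := P.le_opNorm x
    rw [Real.norm_eq_abs] at h1
    nlinarith [le_abs_self (P x x), norm_nonneg x, norm_nonneg (P x)]
  letI core := coreOf P hsym δ hδ hcoer
  letI : NormedAddCommGroup (HilbRenorm X) := core.toNormedAddCommGroup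
  letI : InnerProductSpace ℝ (HilbRenorm X) := InnerProductSpace.ofCore core.toCore
  have hnormY : ∀ y : HilbRenorm X, ‖y‖ ^ 2 = P (show X from y) (show X from y) := fun y =>
    (real_inner_self_eq_norm_sq y).symm
  let j' : HilbRenorm X →ₗ[ℝ] X :=
    { toFun := fun x => show X from x, map_add' := fun _ _ => rfl, map_smul' := fun _ _ => rfl }
  have hXle : ∀ y : HilbRenorm X, ‖j' y‖ ≤ (Real.sqrt δ)⁻¹ * ‖y‖ := by
    intro y
    have hs : (0:ℝ) < Real.sqrt δ := Real.sqrt_pos.mpr hδ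
    rw [inv_mul_eq_div, le_div_iff₀ hs]
    have h1 : δ * ‖j' y‖ ^ 2 ≤ ‖y‖ ^ 2 := by rw [hnormY]; exact hcoer _
    nlinarith [norm_nonneg (j' y), norm_nonneg y, Real.sq_sqrt hδ.le, Real.sqrt_nonneg δ]
  let e' : HilbRenorm X →L[ℝ] X := j'.mkContinuous (Real.sqrt δ)⁻¹ hXle
  have hYle : ∀ y : HilbRenorm X, ‖y‖ ≤ Real.sqrt ‖P‖ * ‖e' y‖ := by
    intro y
    have h1 : ‖y‖ ^ 2 ≤ ‖P‖ * ‖e' y‖ ^ 2 := by rw [hnormY]; exact hPbound _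
    nlinarith [norm_nonneg y, norm_nonneg (e' y), Real.sq_sqrt (norm_nonneg P),
      Real.sqrt_nonneg ‖P‖, mul_nonneg (Real.sqrt_nonneg ‖P‖) (norm_nonneg (e' y))]
  haveI : CompleteSpace (HilbRenorm X) := by
    have hemb : IsUniformEmbedding e' :=
      e'.isUniformEmbedding_of_bound (K := ⟨Real.sqrt ‖P‖, Real.sqrt_nonneg _⟩) hYle
    have hsurj : Function.Surjective e' := fun x => ⟨x, rfl⟩
    exact (hemb.isUniformInducing.completeSpace_congr hsurj).mpr ‹CompleteSpace X›
  let h : StrongDual ℝ (HilbRenorm X) := xss.comp (P.comp e')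
  let w : HilbRenorm X := (InnerProductSpace.toDual ℝ (HilbRenorm X)).symm h
  have hw : ∀ y : X, P (show X from w) y = xss (P y) := fun y =>
    InnerProductSpace.toDual_symm_apply (𝕜 := ℝ) (E := HilbRenorm X)
      (x := show HilbRenorm X from y) (y := h)
  refine ⟨show X from w, fun f => ?_⟩
  let u : HilbRenorm X := (InnerProductSpace.toDual ℝ (HilbRenorm X)).symm (f.comp e')
  have hu : ∀ y : X, P (show X from u) y = f y := fun y =>
    InnerProductSpace.toDual_symm_apply (𝕜 := ℝ) (E := HilbRenorm X)
      (x := show HilbRenorm X from y) (y := f.comp e')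
  have hfu : f = P (show X from u) := ContinuousLinearMap.ext fun y => (hu y).symm
  calc xss f = xss (P (show X from u)) := by rw [← hfu]
    _ = P (show X from w) (show X from u) := (hw _).symm
    _ = P (show X from u) (show X from w) := hsym _ _
    _ = f (show X from w) := by rw [← hfu]

theorem stmt19 [CompleteSpace X] (A : X →L[ℝ] StrongDual ℝ X)
    (hmono : ∀ x y : X, 0 ≤ (A x - A y) (x - y))
    (δ : ℝ) (hδ : 0 < δ) (hcoer : ∀ x : X, δ * ‖x‖ ^ 2 ≤ A x x) :
    ∀ xss : StrongDual ℝ (StrongDual ℝ X),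
      δ * ‖xss‖ ^ 2 ≤
        xss (xss.comp ((2 : ℝ)⁻¹ • (A + ContinuousLinearMap.flip A))) := by
  intro xss
  set P : X →L[ℝ] StrongDual ℝ X := (2 : ℝ)⁻¹ • (A + ContinuousLinearMap.flip A) with hPdef
  have hPapp : ∀ x y : X, P x y = 2⁻¹ * (A x y + A y x) := by
    intro x y
    simp [hPdef, ContinuousLinearMap.smul_apply, ContinuousLinearMap.add_apply,
      ContinuousLinearMap.flip_apply, smul_eq_mul]
    ring
  have hPsymm : ∀ x y : X, P x y = P y x := by intro x y; rw [hPapp, hPapp]; ring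
  have hPcoer : ∀ x : X, δ * ‖x‖ ^ 2 ≤ P x x := by
    intro x; rw [hPapp]; have := hcoer x; linarith
  obtain ⟨w, key⟩ := exists_rep P hPsymm δ hδ hPcoer xss
  have hxsseq : xss = NormedSpace.inclusionInDoubleDual ℝ X w :=
    ContinuousLinearMap.ext fun f => by rw [NormedSpace.dual_def]; exact key f
  have hnorm : ‖xss‖ = ‖w‖ := by
    rw [hxsseq]
    exact (NormedSpace.inclusionInDoubleDualLi ℝ (E := X)).norm_map w
  have h1 : xss.comp P = P w := ContinuousLinearMap.ext fun x => by
    rw [ContinuousLinearMap.comp_apply]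
    rw [key (P x), hPsymm]
  rw [h1, key (P w), hnorm]
  exact hPcoer w
end
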